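/- arXiv:2104.12328 — 7 statements merged into one kernel-verified Lean document; each statement's English description precedes it below -/
import Mathlib

section
/- Assume that for each 0 ≤ t₁ ≤ t₂ the map (ξ₁,ξ₂) ↦ l(t₁,t₂,ξ₁,ξ₂,u) is continuous. Then u is weakly persistent at x₀ if and only if there exists T > 0 such that for every t ≥ T there exists R_t > 0 such that for every ξ₁ ∈ B̄(x(t−T),R_t): ξ₁ is a global minimizer of ξ₂ ↦ l(t−T,t,ξ₁,ξ₂,u) (i.e. l(t−T,t,ξ₁,ξ₁,u) = 0 ≤ l(t−T,t,ξ₁,ξ₂,u) for all ξ₂ ∈ ℝ^{n_x}) and it is the unique minimizer within B̄(x(t−T),R_t) (l(t−T,t,ξ₁,ξ₂,u) > 0 for all ξ₂ ∈ B̄(x(t−T),R_t) with ξ₂ ≠ ξ₁). In particular, in this case x(t−T) is a global minimizer and a strict local minimizer of ξ ↦ l(t−T,t,x(t−T),ξ,u). -/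
open MeasureTheory Metric Set Filter

/-- State space `ℝ^n` with the Euclidean norm. -/
abbrev Vec (n : ℕ) := EuclideanSpace ℝ (Fin n)

/-- Cumulative output error
`l(t₁,t₂,ξ₁,ξ₂,u) = ∫_{t₁}^{t₂} ‖h(φ(s;t₁,ξ₁,u),u(s)) − h(φ(s;t₁,ξ₂,u),u(s))‖² ds`. -/
noncomputable def cumError {nx nu ny : ℕ}
    (h : Vec nx → Vec nu → Vec ny) (φ : ℝ → ℝ → Vec nx → Vec nx)
    (u : ℝ → Vec nu) (t₁ t₂ : ℝ) (ξ₁ ξ₂ : Vec nx) : ℝ :=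
  ∫ s in t₁..t₂, ‖h (φ s t₁ ξ₁) (u s) - h (φ s t₁ ξ₂) (u s)‖ ^ 2

/-- A `𝒦`-function: continuous, strictly increasing on `[0,∞)`, vanishing at `0`. -/
def IsKFunction (κ : ℝ → ℝ) : Prop :=
  ContinuousOn κ (Set.Ici 0) ∧ StrictMonoOn κ (Set.Ici 0) ∧ κ 0 = 0

/-- Weakly persistent input trajectory at `x₀`. -/
def WeaklyPersistentAt {nx nu ny : ℕ}
    (h : Vec nx → Vec nu → Vec ny) (φ : ℝ → ℝ → Vec nx → Vec nx)
    (u : ℝ → Vec nu) (x₀ : Vec nx) : Prop :=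
  ∃ T > (0 : ℝ), ∀ t ≥ T, ∃ R > (0 : ℝ), ∃ κ : ℝ → ℝ, IsKFunction κ ∧
    ∀ ξ₁ ∈ Metric.closedBall (φ (t - T) 0 x₀) R,
      ∀ ξ₂ ∈ Metric.closedBall (φ (t - T) 0 x₀) R,
        κ ‖ξ₁ - ξ₂‖ ≤ cumError h φ u (t - T) t ξ₁ ξ₂

lemma kfun_of_min {n : ℕ} (L : Vec n → Vec n → ℝ) (z : Vec n) (R : ℝ) (hR : 0 < R)
    (hcont : Continuous fun p : Vec n × Vec n => L p.1 p.2)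
    (hnonneg : ∀ ξ₁ ξ₂ : Vec n, 0 ≤ L ξ₁ ξ₂)
    (hpos : ∀ ξ₁ ∈ closedBall z R, ∀ ξ₂ ∈ closedBall z R, ξ₂ ≠ ξ₁ → 0 < L ξ₁ ξ₂) :
    ∃ κ : ℝ → ℝ, IsKFunction κ ∧ ∀ ξ₁ ∈ closedBall z R, ∀ ξ₂ ∈ closedBall z R,
      κ ‖ξ₁ - ξ₂‖ ≤ L ξ₁ ξ₂ := by
  by_cases hn : Subsingleton (Vec n)
  · refine ⟨id, ⟨continuous_id.continuousOn, fun a _ b _ hab => hab, rfl⟩, ?_⟩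
    intro ξ₁ _ ξ₂ _
    have hxy : ξ₁ = ξ₂ := Subsingleton.elim _ _
    simp [hxy, hnonneg ξ₂ ξ₂]
  · rw [not_subsingleton_iff_nontrivial] at hn
    obtain ⟨w, hw⟩ := exists_norm_eq (Vec n) hR.le
    set K : Set (Vec n × Vec n) := closedBall z R ×ˢ closedBall z R with hKdef
    have hKc : IsCompact K := (isCompact_closedBall z R).prod (isCompact_closedBall z R)
    set nrm : Vec n × Vec n → ℝ := fun p => ‖p.1 - p.2‖ with hnrmdef
    have hnrm : Continuous nrm := (continuous_fst.sub continuous_snd).norm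
    set S : ℝ → Set (Vec n × Vec n) := fun s => K ∩ {p | s ≤ nrm p} with hSdef
    have hScompact : ∀ s, IsCompact (S s) := fun s =>
      hKc.inter_right (isClosed_le continuous_const hnrm)
    have hSne : ∀ s ≤ 2 * R, (S s).Nonempty := by
      intro s hs
      refine ⟨(z + w, z - w), ⟨?_, ?_⟩, ?_⟩
      · simp [mem_closedBall, dist_eq_norm, hw]
      · simp [mem_closedBall, dist_eq_norm, hw]
      · have hsum : (z + w) - (z - w) = (2 : ℝ) • w := by
          rw [two_smul]; abel
        have : nrm (z + w, z - w) = 2 * R := by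
          simp only [hnrmdef, hsum, norm_smul]
          rw [hw]; norm_num
        simp only [mem_setOf_eq, this]; exact hs
    set F : Vec n × Vec n → ℝ := fun p => L p.1 p.2 with hFdef
    have hFbdd : ∀ s, BddBelow (F '' S s) := by
      rintro s
      exact ⟨0, by rintro y ⟨p, _, rfl⟩; exact hnonneg _ _⟩
    set g : ℝ → ℝ := fun s => sInf (F '' S s) with hgdef
    have hg_le : ∀ s, ∀ p ∈ S s, g s ≤ F p := fun s p hp =>
      csInf_le (hFbdd s) (mem_image_of_mem F hp)
    have hg_nonneg : ∀ s, 0 ≤ g s := fun s =>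
      Real.sInf_nonneg (by rintro y ⟨p, _, rfl⟩; exact hnonneg _ _)
    have hg_mono : ∀ s₁ s₂, s₁ ≤ s₂ → s₂ ≤ 2 * R → g s₁ ≤ g s₂ := by
      intro s₁ s₂ h12 h2
      refine csInf_le_csInf (hFbdd s₁) ((hSne s₂ h2).image F) (image_mono (f := F) ?_)
      intro p hp; exact ⟨hp.1, le_trans h12 hp.2⟩
    have hg_pos : ∀ s, 0 < s → s ≤ 2 * R → 0 < g s := by
      intro s hs hs2
      obtain ⟨p, hpS, hpmin⟩ := (hScompact s).exists_isMinOn (hSne s hs2)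
        hcont.continuousOn
      have hne : p.1 ≠ p.2 := by
        have : (0 : ℝ) < ‖p.1 - p.2‖ := lt_of_lt_of_le hs hpS.2
        exact sub_ne_zero.mp (norm_pos_iff.mp this)
      have hFp : 0 < F p := hpos p.1 hpS.1.1 p.2 hpS.1.2 (Ne.symm hne)
      have : F p ≤ g s := le_csInf ((hSne s hs2).image F)
        (by rintro y ⟨q, hq, rfl⟩; exact hpmin hq)
      linarith
    -- the regularized envelope
    set κ₀ : ℝ → ℝ := fun r => sInf ((fun s => g s + |r - s|) '' Icc 0 (2 * R)) with hκ₀def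
    have hIne : (Icc (0 : ℝ) (2 * R)).Nonempty := nonempty_Icc.mpr (by linarith)
    have hκ₀bdd : ∀ r : ℝ, BddBelow ((fun s => g s + |r - s|) '' Icc 0 (2 * R)) := by
      intro r
      exact ⟨0, by rintro y ⟨s, _, rfl⟩; exact add_nonneg (hg_nonneg s) (abs_nonneg _)⟩
    have hκ₀le : ∀ r : ℝ, ∀ s ∈ Icc (0:ℝ) (2*R), κ₀ r ≤ g s + |r - s| := fun r s hs =>
      csInf_le (hκ₀bdd r) (mem_image_of_mem _ hs)
    have hκ₀_le_g : ∀ r ∈ Icc (0:ℝ) (2*R), κ₀ r ≤ g r := by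
      intro r hr
      have := hκ₀le r r hr
      simpa using this
    have hκ₀nonneg : ∀ r, 0 ≤ κ₀ r := fun r =>
      Real.sInf_nonneg (by rintro y ⟨s, _, rfl⟩; exact add_nonneg (hg_nonneg s) (abs_nonneg _))
    have hκ₀mono : ∀ r₁ r₂, 0 ≤ r₁ → r₁ ≤ r₂ → κ₀ r₁ ≤ κ₀ r₂ := by
      intro r₁ r₂ hr₁ h12
      refine le_csInf (hIne.image _) ?_
      rintro y ⟨s, hs, rfl⟩
      dsimp only
      by_cases hsr : s ≤ r₁
      · have h1 : κ₀ r₁ ≤ g s + |r₁ - s| := hκ₀le r₁ s hs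
        have h2 : |r₁ - s| ≤ |r₂ - s| := by
          rw [abs_of_nonneg (by linarith)]
          have : r₂ - s ≤ |r₂ - s| := le_abs_self _
          linarith
        linarith
      · push_neg at hsr
        have hr₁m : r₁ ∈ Icc (0:ℝ) (2*R) := ⟨hr₁, by linarith [hs.2]⟩
        have h1 : κ₀ r₁ ≤ g r₁ := hκ₀_le_g r₁ hr₁m
        have h2 : g r₁ ≤ g s := hg_mono r₁ s hsr.le hs.2
        have h3 : 0 ≤ |r₂ - s| := abs_nonneg _
        linarith
    have hκ₀lip : ∀ r₁ r₂ : ℝ, κ₀ r₁ ≤ κ₀ r₂ + |r₁ - r₂| := by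
      intro r₁ r₂
      have : κ₀ r₁ - |r₁ - r₂| ≤ κ₀ r₂ := by
        refine le_csInf (hIne.image _) ?_
        rintro y ⟨s, hs, rfl⟩
        dsimp only
        have h1 : κ₀ r₁ ≤ g s + |r₁ - s| := hκ₀le r₁ s hs
        have h2 : |r₁ - s| ≤ |r₁ - r₂| + |r₂ - s| := abs_sub_le r₁ r₂ s
        linarith
      linarith
    have hκ₀cont : Continuous κ₀ := by
      refine LipschitzWith.continuous (K := 1) (LipschitzWith.of_dist_le_mul ?_)
      intro x y
      rw [Real.dist_eq, Real.dist_eq, NNReal.coe_one, one_mul]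
      rw [abs_sub_le_iff]
      constructor
      · have := hκ₀lip x y; linarith [le_abs_self (x - y)]
      · have := hκ₀lip y x
        have h2 : |y - x| = |x - y| := abs_sub_comm y x
        linarith
    have hκ₀pos : ∀ r, 0 < r → 0 < κ₀ r := by
      intro r hr
      set b := min (r / 2) (2 * R) with hbdef
      have hb0 : 0 < b := lt_min (by linarith) (by linarith)
      have hb2R : b ≤ 2 * R := min_le_right _ _
      have hgb : 0 < g b := hg_pos b hb0 hb2R
      have key : min (g b) (r / 2) ≤ κ₀ r := by
        refine le_csInf (hIne.image _) ?_
        rintro y ⟨s, hs, rfl⟩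
        dsimp only
        by_cases hsb : b ≤ s
        · have : g b ≤ g s := hg_mono b s hsb hs.2
          have := abs_nonneg (r - s)
          calc min (g b) (r / 2) ≤ g b := min_le_left _ _
            _ ≤ g s + |r - s| := by linarith
        · push_neg at hsb
          have hs2 : s < r / 2 := lt_of_lt_of_le hsb (min_le_left _ _)
          have : r / 2 ≤ |r - s| := by
            rw [abs_of_nonneg (by linarith)]; linarith
          calc min (g b) (r / 2) ≤ r / 2 := min_le_right _ _
            _ ≤ g s + |r - s| := by linarith [hg_nonneg s]
      exact lt_of_lt_of_le (lt_min hgb (by linarith)) key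
    -- final κ
    refine ⟨fun r => (r / (2 * R + r)) * κ₀ r, ⟨?_, ?_, ?_⟩, ?_⟩
    · refine ContinuousOn.mul ?_ hκ₀cont.continuousOn
      refine ContinuousOn.div continuousOn_id (by fun_prop) ?_
      intro x hx
      have : 0 < 2 * R + x := by
        have := mem_Ici.mp hx; linarith
      exact this.ne'
    · intro a ha b hb hab
      simp only [mem_Ici] at ha hb
      have h1 : κ₀ a ≤ κ₀ b := hκ₀mono a b ha hab.le
      have h2 : 0 < κ₀ b := hκ₀pos b (lt_of_le_of_lt ha hab)
      have hda : 0 < 2 * R + a := by linarith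
      have hdb : 0 < 2 * R + b := by linarith
      have h3 : a / (2 * R + a) < b / (2 * R + b) := by
        rw [div_lt_div_iff₀ hda hdb]; nlinarith
      calc a / (2 * R + a) * κ₀ a ≤ a / (2 * R + a) * κ₀ b :=
            mul_le_mul_of_nonneg_left h1 (div_nonneg ha hda.le)
        _ < b / (2 * R + b) * κ₀ b := mul_lt_mul_of_pos_right h3 h2
    · simp
    · intro ξ₁ h1 ξ₂ h2
      set r := ‖ξ₁ - ξ₂‖ with hrdef
      have hr2R : r ≤ 2 * R := by
        have ht := dist_triangle ξ₁ z ξ₂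
        rw [dist_eq_norm, dist_eq_norm] at ht
        have e1 : ‖ξ₁ - z‖ ≤ R := mem_closedBall_iff_norm.mp h1
        have e2 : ‖z - ξ₂‖ ≤ R := by
          rw [norm_sub_rev]; exact mem_closedBall_iff_norm.mp h2
        calc r ≤ ‖ξ₁ - z‖ + ‖z - ξ₂‖ := ht
          _ ≤ 2 * R := by linarith
      have hfac : r / (2 * R + r) ≤ 1 :=
        div_le_one_of_le₀ (by linarith) (by positivity)
      have s1 : r / (2 * R + r) * κ₀ r ≤ κ₀ r :=
        mul_le_of_le_one_left (hκ₀nonneg r) hfac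
      have s2 : κ₀ r ≤ g r := hκ₀_le_g r ⟨norm_nonneg _, hr2R⟩
      have s3 : g r ≤ L ξ₁ ξ₂ := hg_le r (ξ₁, ξ₂) ⟨⟨h1, h2⟩, le_refl r⟩
      linarith

lemma cumError_nonneg {nx nu ny : ℕ}
    (h : Vec nx → Vec nu → Vec ny) (φ : ℝ → ℝ → Vec nx → Vec nx)
    (u : ℝ → Vec nu) {t₁ t₂ : ℝ} (ht : t₁ ≤ t₂) (ξ₁ ξ₂ : Vec nx) :
    0 ≤ cumError h φ u t₁ t₂ ξ₁ ξ₂ :=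
  intervalIntegral.integral_nonneg ht (fun s _ => by positivity)

lemma cumError_self {nx nu ny : ℕ}
    (h : Vec nx → Vec nu → Vec ny) (φ : ℝ → ℝ → Vec nx → Vec nx)
    (u : ℝ → Vec nu) (t₁ t₂ : ℝ) (ξ : Vec nx) :
    cumError h φ u t₁ t₂ ξ ξ = 0 := by
  simp [cumError]

/-- characterization of weakly persistent inputs via local/global
minimizers of the MHE cost, plus the "in particular" consequence for `x(t−T)`. -/
theorem stmt3 {nx nu ny : ℕ}
    (f : Vec nx → Vec nu → Vec nx) (h : Vec nx → Vec nu → Vec ny)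
    (u : ℝ → Vec nu) (φ : ℝ → ℝ → Vec nx → Vec nx) (x₀ : Vec nx)
    (hf : ContDiff ℝ 2 (Function.uncurry f))
    (hh : ContDiff ℝ 2 (Function.uncurry h))
    (hflow_init : ∀ s₁ : ℝ, 0 ≤ s₁ → ∀ ξ, φ s₁ s₁ ξ = ξ)
    (hflow_ode : ∀ s₁ s : ℝ, 0 ≤ s₁ → s₁ ≤ s → ∀ ξ,
      HasDerivAt (fun τ => φ τ s₁ ξ) (f (φ s s₁ ξ) (u s)) s)
    (hcont : ∀ t₁ t₂ : ℝ, 0 ≤ t₁ → t₁ ≤ t₂ →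
      Continuous (fun p : Vec nx × Vec nx => cumError h φ u t₁ t₂ p.1 p.2)) :
    (WeaklyPersistentAt h φ u x₀ ↔
      ∃ T > (0 : ℝ), ∀ t ≥ T, ∃ R > (0 : ℝ),
        ∀ ξ₁ ∈ Metric.closedBall (φ (t - T) 0 x₀) R,
          (cumError h φ u (t - T) t ξ₁ ξ₁ = 0 ∧
            ∀ ξ₂ : Vec nx, 0 ≤ cumError h φ u (t - T) t ξ₁ ξ₂) ∧
          (∀ ξ₂ ∈ Metric.closedBall (φ (t - T) 0 x₀) R, ξ₂ ≠ ξ₁ →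
            0 < cumError h φ u (t - T) t ξ₁ ξ₂)) ∧
    (WeaklyPersistentAt h φ u x₀ →
      ∃ T > (0 : ℝ), ∀ t ≥ T,
        (cumError h φ u (t - T) t (φ (t - T) 0 x₀) (φ (t - T) 0 x₀) = 0 ∧
          ∀ ξ : Vec nx, 0 ≤ cumError h φ u (t - T) t (φ (t - T) 0 x₀) ξ) ∧
        ∃ ε > (0 : ℝ), ∀ ξ ∈ Metric.ball (φ (t - T) 0 x₀) ε, ξ ≠ φ (t - T) 0 x₀ →
          cumError h φ u (t - T) t (φ (t - T) 0 x₀) (φ (t - T) 0 x₀) <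
            cumError h φ u (t - T) t (φ (t - T) 0 x₀) ξ) := by
  constructor
  · constructor
    · rintro ⟨T, hT, hWP⟩
      refine ⟨T, hT, fun t ht => ?_⟩
      obtain ⟨R, hR, κ, hκ, hineq⟩ := hWP t ht
      have htt : t - T ≤ t := by linarith
      refine ⟨R, hR, fun ξ₁ hξ₁ => ⟨⟨cumError_self h φ u _ _ ξ₁,
        fun ξ₂ => cumError_nonneg h φ u htt ξ₁ ξ₂⟩, fun ξ₂ hξ₂ hne => ?_⟩⟩
      have hb := hineq ξ₁ hξ₁ ξ₂ hξ₂
      have hnorm : 0 < ‖ξ₁ - ξ₂‖ := by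
        rw [norm_pos_iff, sub_ne_zero]; exact hne.symm
      have hκpos : κ 0 < κ ‖ξ₁ - ξ₂‖ :=
        hκ.2.1 (self_mem_Ici) (mem_Ici.mpr (norm_nonneg _)) hnorm
      rw [hκ.2.2] at hκpos
      linarith
    · rintro ⟨T, hT, hmin⟩
      refine ⟨T, hT, fun t ht => ?_⟩
      obtain ⟨R, hR, hmin'⟩ := hmin t ht
      have h0T : (0 : ℝ) ≤ t - T := by linarith
      have htt : t - T ≤ t := by linarith
      obtain ⟨κ, hκ, hb⟩ := kfun_of_min (cumError h φ u (t - T) t) (φ (t - T) 0 x₀) R hR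
        (hcont (t - T) t h0T htt)
        (fun ξ₁ ξ₂ => cumError_nonneg h φ u htt ξ₁ ξ₂)
        (fun ξ₁ hξ₁ ξ₂ hξ₂ hne => (hmin' ξ₁ hξ₁).2 ξ₂ hξ₂ hne)
      exact ⟨R, hR, κ, hκ, hb⟩
  · rintro ⟨T, hT, hWP⟩
    refine ⟨T, hT, fun t ht => ?_⟩
    obtain ⟨R, hR, κ, hκ, hineq⟩ := hWP t ht
    have htt : t - T ≤ t := by linarith
    refine ⟨⟨cumError_self h φ u _ _ _, fun ξ => cumError_nonneg h φ u htt _ ξ⟩,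
      R, hR, fun ξ hξ hne => ?_⟩
    have hz : φ (t - T) 0 x₀ ∈ closedBall (φ (t - T) 0 x₀) R := mem_closedBall_self hR.le
    have hb := hineq (φ (t - T) 0 x₀) hz ξ (ball_subset_closedBall hξ)
    have hnorm : 0 < ‖φ (t - T) 0 x₀ - ξ‖ := by
      rw [norm_pos_iff, sub_ne_zero]; exact (Ne.symm hne)
    have hκpos : κ 0 < κ ‖φ (t - T) 0 x₀ - ξ‖ :=
      hκ.2.1 (self_mem_Ici) (mem_Ici.mpr (norm_nonneg _)) hnorm
    rw [hκ.2.2] at hκpos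
    rw [cumError_self]
    linarith
end

section
/- Assume that for each T > 0 and t ≥ T the map (ξ₁,ξ₂) ↦ l(t−T,t,ξ₁,ξ₂,u) is twice continuously differentiable. If u is weakly persistent at x₀ and all the associated K-functions κ_t can be chosen with finite sensitivity, then there exists T > 0 such that for every t ≥ T there exists R_t > 0 with d²_{ξ₂}l(t−T,t,ξ₁,ξ₂,u) positive definite for all (ξ₁,ξ₂) ∈ B̄(x(t−T),R_t)². -/
open MeasureTheory Metric Set Filter

/-- A `𝒦`-function with finite sensitivity: `inf{κ(s)/s² : 0 < s ≤ r} > 0` for some `r > 0`. -/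
def FiniteSensitivity (κ : ℝ → ℝ) : Prop :=
  ∃ r > (0 : ℝ), ∃ c > (0 : ℝ), ∀ s : ℝ, 0 < s → s ≤ r → c ≤ κ s / s ^ 2

/-- Weakly persistent input trajectory at `x₀` with all associated `𝒦`-functions
of finite sensitivity. -/
def WeaklyPersistentAtFS {nx nu ny : ℕ}
    (h : Vec nx → Vec nu → Vec ny) (φ : ℝ → ℝ → Vec nx → Vec nx)
    (u : ℝ → Vec nu) (x₀ : Vec nx) : Prop :=
  ∃ T > (0 : ℝ), ∀ t ≥ T, ∃ R > (0 : ℝ), ∃ κ : ℝ → ℝ,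
    IsKFunction κ ∧ FiniteSensitivity κ ∧
    ∀ ξ₁ ∈ Metric.closedBall (φ (t - T) 0 x₀) R,
      ∀ ξ₂ ∈ Metric.closedBall (φ (t - T) 0 x₀) R,
        κ ‖ξ₁ - ξ₂‖ ≤ cumError h φ u (t - T) t ξ₁ ξ₂

/-- Second Fréchet derivative of `ξ ↦ l(t₁,t₂,ξ₁,ξ,u)` at `ξ₂`, as a bilinear form. -/
noncomputable def d2l {nx nu ny : ℕ}
    (h : Vec nx → Vec nu → Vec ny) (φ : ℝ → ℝ → Vec nx → Vec nx)
    (u : ℝ → Vec nu) (t₁ t₂ : ℝ) (ξ₁ ξ₂ v w : Vec nx) : ℝ :=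
  iteratedFDeriv ℝ 2 (fun ξ => cumError h φ u t₁ t₂ ξ₁ ξ) ξ₂ ![v, w]

section AuxLemmas

variable {E : Type*} [NormedAddCommGroup E] [NormedSpace ℝ E]

/-- If a C² real function is nonnegative near `0` and vanishes at `0`,
its second derivative at `0` is nonnegative. -/
lemma second_deriv_nonneg_aux (p p' p'' : ℝ → ℝ)
    (hp' : ∀ t, HasDerivAt p (p' t) t) (hp'' : ∀ t, HasDerivAt p' (p'' t) t)
    (hcont : Continuous p'') (δ : ℝ) (hδ : 0 < δ) (h0 : p 0 = 0)
    (hnn : ∀ t : ℝ, |t| ≤ δ → 0 ≤ p t) : 0 ≤ p'' 0 := by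
  by_contra hneg
  push_neg at hneg
  -- first derivative vanishes at 0
  have hmin : IsLocalMin p 0 := by
    have : ∀ᶠ t in nhds (0 : ℝ), p 0 ≤ p t := by
      filter_upwards [Metric.closedBall_mem_nhds (0 : ℝ) hδ] with t ht
      rw [Metric.mem_closedBall, Real.dist_eq, sub_zero] at ht
      rw [h0]; exact hnn t ht
    exact this
  have hp'0 : p' 0 = 0 := by
    have := hmin.deriv_eq_zero
    rwa [(hp' 0).deriv] at this
  -- find δ' ≤ δ with p'' < 0 on [-δ', δ']
  obtain ⟨d, hd, hball⟩ := Metric.continuousAt_iff.1 (hcont.continuousAt (x := 0))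
    (-(p'' 0)) (by linarith)
  set δ' : ℝ := min (d / 2) δ with hδ'def
  have hδ'pos : 0 < δ' := lt_min (by linarith) hδ
  have hδ'le : δ' ≤ δ := min_le_right _ _
  have hneg' : ∀ s : ℝ, |s| ≤ δ' → p'' s < 0 := by
    intro s hs
    have : dist s 0 < d := by
      rw [Real.dist_eq, sub_zero]
      exact lt_of_le_of_lt (hs.trans (min_le_left _ _)) (by linarith)
    have := hball this
    rw [Real.dist_eq] at this
    have := abs_lt.1 this
    linarith [this.1, this.2]
  -- p' is strictly decreasing on [0, δ']
  have hantip' : StrictAntiOn p' (Set.Icc 0 δ') := by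
    apply strictAntiOn_of_deriv_neg (convex_Icc 0 δ')
    · exact (continuous_iff_continuousAt.2 fun t => (hp'' t).differentiableAt.continuousAt).continuousOn
    · intro x hx
      rw [interior_Icc] at hx
      rw [(hp'' x).deriv]
      exact hneg' x (by rw [abs_le]; constructor <;> [linarith [hx.1]; linarith [hx.2]])
  -- hence p' < 0 on (0, δ']
  have hp'neg : ∀ x ∈ Set.Ioo (0 : ℝ) δ', p' x < 0 := by
    intro x hx
    have := hantip' (Set.left_mem_Icc.2 hδ'pos.le) ⟨hx.1.le, hx.2.le⟩ hx.1
    rwa [hp'0] at this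
  -- p is strictly decreasing on [0, δ']
  have hantip : StrictAntiOn p (Set.Icc 0 δ') := by
    apply strictAntiOn_of_deriv_neg (convex_Icc 0 δ')
    · exact (continuous_iff_continuousAt.2 fun t => (hp' t).differentiableAt.continuousAt).continuousOn
    · intro x hx
      rw [interior_Icc] at hx
      rw [(hp' x).deriv]
      exact hp'neg x hx
  have : p δ' < p 0 :=
    hantip (Set.left_mem_Icc.2 hδ'pos.le) (Set.right_mem_Icc.2 hδ'pos.le) hδ'pos
  rw [h0] at this
  have := hnn δ' (by rw [abs_of_pos hδ'pos]; exact hδ'le)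
  linarith

/-- First and second derivatives of a C² function along a line. -/
lemma line_derivs (L : E → ℝ) (hL : ContDiff ℝ 2 L) (a w : E) :
    (∀ t : ℝ, HasDerivAt (fun s : ℝ => L (a + s • w))
        (fderiv ℝ L (a + t • w) w) t) ∧
    (∀ t : ℝ, HasDerivAt (fun s : ℝ => fderiv ℝ L (a + s • w) w)
        (fderiv ℝ (fderiv ℝ L) (a + t • w) w w) t) := by
  have hA : ∀ t : ℝ, HasDerivAt (fun s : ℝ => a + s • w) w t := by
    intro t
    simpa using ((hasDerivAt_id t).smul_const w).const_add a
  have hΦ : ContDiff ℝ 1 (fderiv ℝ L) := hL.fderiv_right (by norm_num)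
  constructor
  · intro t
    exact ((hL.differentiable (by norm_num) (a + t • w)).hasFDerivAt.comp_hasDerivAt t
      (hA t))
  · intro t
    have h1 : HasDerivAt (fun s : ℝ => fderiv ℝ L (a + s • w))
        (fderiv ℝ (fderiv ℝ L) (a + t • w) w) t :=
      ((hΦ.differentiable one_ne_zero (a + t • w)).hasFDerivAt.comp_hasDerivAt t (hA t))
    have h2 := ((ContinuousLinearMap.apply ℝ ℝ w).hasFDerivAt
      (x := fderiv ℝ L (a + t • w))).comp_hasDerivAt t h1
    exact h2

/-- The second partial Fréchet derivative in the second variable equals the full second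
derivative applied to vectors of the form `(0, v)`. -/
lemma partial_second_eq (L : E × E → ℝ) (hL : ContDiff ℝ 2 L) (ξ₁ ξ₂ v w : E) :
    iteratedFDeriv ℝ 2 (fun ξ => L (ξ₁, ξ)) ξ₂ ![v, w]
      = fderiv ℝ (fderiv ℝ L) (ξ₁, ξ₂) (0, v) (0, w) := by
  have hJ : ∀ ξ : E, HasFDerivAt (fun ξ : E => (ξ₁, ξ))
      (ContinuousLinearMap.inr ℝ E E) ξ := fun ξ => hasFDerivAt_prodMk_right ξ₁ ξ
  have hΦ : ContDiff ℝ 1 (fderiv ℝ L) := hL.fderiv_right (by norm_num)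
  set C : ((E × E) →L[ℝ] ℝ) →L[ℝ] (E →L[ℝ] ℝ) :=
    (ContinuousLinearMap.compL ℝ E (E × E) ℝ).flip (ContinuousLinearMap.inr ℝ E E) with hC
  have ha : ∀ ξ : E, fderiv ℝ (fun ξ => L (ξ₁, ξ)) ξ
      = C (fderiv ℝ L (ξ₁, ξ)) := by
    intro ξ
    have := (((hL.differentiable (by norm_num)) (ξ₁, ξ)).hasFDerivAt.comp ξ (hJ ξ)).fderiv
    rw [show ((fun p : E × E => L p) ∘ fun ξ : E => (ξ₁, ξ)) = fun ξ => L (ξ₁, ξ) from rfl] at this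
    rw [this]
    rfl
  have hfun : fderiv ℝ (fun ξ => L (ξ₁, ξ)) = fun ξ => C (fderiv ℝ L (ξ₁, ξ)) :=
    funext ha
  have h1 : HasFDerivAt (fun ξ : E => fderiv ℝ L (ξ₁, ξ))
      ((fderiv ℝ (fderiv ℝ L) (ξ₁, ξ₂)).comp (ContinuousLinearMap.inr ℝ E E)) ξ₂ :=
    ((hΦ.differentiable one_ne_zero (ξ₁, ξ₂)).hasFDerivAt.comp ξ₂ (hJ ξ₂))
  have h2 := C.hasFDerivAt.comp ξ₂ h1
  have hd : HasFDerivAt (fderiv ℝ (fun ξ => L (ξ₁, ξ)))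
      (C.comp ((fderiv ℝ (fderiv ℝ L) (ξ₁, ξ₂)).comp (ContinuousLinearMap.inr ℝ E E))) ξ₂ := by
    rw [hfun]; exact h2
  rw [iteratedFDeriv_two_apply, hd.fderiv]
  simp [C, ContinuousLinearMap.flip_apply, ContinuousLinearMap.compL_apply]

/-- Key local lemma: a quadratic lower bound for `ξ ↦ L (z, ξ)` near `z` forces
the second derivative of `L` in the second variable to be positive definite near `(z, z)`. -/
lemma key_lemma (L : E × E → ℝ) (hL : ContDiff ℝ 2 L) (z : E) (R c : ℝ)
    (hR : 0 < R) (hc : 0 < c) (hz : L (z, z) = 0)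
    (hlb : ∀ ξ₂ : E, dist ξ₂ z ≤ R → c * ‖z - ξ₂‖ ^ 2 ≤ L (z, ξ₂)) :
    ∃ R' > (0 : ℝ), ∀ p : E × E, dist p (z, z) ≤ R' → ∀ v : E, v ≠ 0 →
      0 < fderiv ℝ (fderiv ℝ L) p (0, v) (0, v) := by
  set B := fderiv ℝ (fderiv ℝ L) with hBdef
  have hBc : Continuous B := (hL.fderiv_right (m := 1) (by norm_num)).continuous_fderiv one_ne_zero
  -- Step 1: lower bound for B at (z, z)
  have claim1 : ∀ v : E, v ≠ 0 → 2 * (c * ‖v‖ ^ 2) ≤ B (z, z) (0, v) (0, v) := by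
    intro v hv
    have hvn : 0 < ‖v‖ := norm_pos_iff.2 hv
    set w : E × E := ((0 : E), v) with hw
    obtain ⟨h1, h2⟩ := line_derivs L hL (z, z) w
    have hpt : ∀ s : ℝ, ((z, z) : E × E) + s • w = (z, z + s • v) := by
      intro s
      simp [hw, Prod.ext_iff]
    set c' : ℝ := c * ‖v‖ ^ 2 with hc'
    have hc'pos : 0 < c' := by positivity
    set p : ℝ → ℝ := fun s => L ((z, z) + s • w) - c' * s ^ 2 with hp
    set p' : ℝ → ℝ := fun s => fderiv ℝ L ((z, z) + s • w) w - 2 * c' * s with hp'def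
    set p'' : ℝ → ℝ := fun s => B ((z, z) + s • w) w w - 2 * c' with hp''def
    have hp' : ∀ s, HasDerivAt p (p' s) s := by
      intro s
      have hsq : HasDerivAt (fun s : ℝ => c' * s ^ 2) (2 * c' * s) s := by
        have := (hasDerivAt_pow 2 s).const_mul c'
        exact this.congr_deriv (by push_cast; ring)
      exact (h1 s).sub hsq
    have hp'' : ∀ s, HasDerivAt p' (p'' s) s := by
      intro s
      have hlin : HasDerivAt (fun s : ℝ => 2 * c' * s) (2 * c') s := by
        simpa using (hasDerivAt_id s).const_mul (2 * c')
      exact (h2 s).sub hlin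
    have hcont : Continuous p'' := by
      have hAc : Continuous fun s : ℝ => ((z, z) : E × E) + s • w :=
        continuous_const.add (continuous_id.smul continuous_const)
      exact (((hBc.comp hAc).clm_apply continuous_const).clm_apply
        continuous_const).sub continuous_const
    have h0 : p 0 = 0 := by simp [hp, hz]
    set δ : ℝ := R / ‖v‖ with hδdef
    have hδ : 0 < δ := by positivity
    have hnn : ∀ s : ℝ, |s| ≤ δ → 0 ≤ p s := by
      intro s hs
      have hdist : dist (z + s • v) z ≤ R := by
        rw [dist_eq_norm]
        have : ‖z + s • v - z‖ = |s| * ‖v‖ := by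
          rw [add_sub_cancel_left, norm_smul, Real.norm_eq_abs]
        rw [this]
        calc |s| * ‖v‖ ≤ δ * ‖v‖ := by
              exact mul_le_mul_of_nonneg_right hs (norm_nonneg v)
          _ = R := by rw [hδdef, div_mul_cancel₀ R hvn.ne']
      have hlow := hlb (z + s • v) hdist
      have hnorm : ‖z - (z + s • v)‖ ^ 2 = s ^ 2 * ‖v‖ ^ 2 := by
        have : z - (z + s • v) = -(s • v) := by abel
        rw [this, norm_neg, norm_smul, Real.norm_eq_abs, mul_pow, sq_abs]
      rw [hnorm] at hlow
      have : p s = L (z, z + s • v) - c' * s ^ 2 := by rw [hp]; simp [hpt]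
      rw [this]
      have : c * (s ^ 2 * ‖v‖ ^ 2) = c' * s ^ 2 := by rw [hc']; ring
      linarith [hlow, this ▸ hlow]
    have := second_deriv_nonneg_aux p p' p'' hp' hp'' hcont δ hδ h0 hnn
    have h00 : p'' 0 = B (z, z) w w - 2 * c' := by
      rw [hp''def]; simp
    rw [h00] at this
    linarith
  -- Step 2: continuity perturbation
  obtain ⟨δ₂, hδ₂, hball⟩ := (Metric.continuousAt_iff (f := B) (a := (z, z))).1 hBc.continuousAt c hc
  refine ⟨δ₂ / 2, by positivity, ?_⟩
  intro q hq v hv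
  have hdB : ‖B q - B (z, z)‖ < c := by
    exact lt_of_eq_of_lt (dist_eq_norm (B q) (B (z, z))).symm (hball (lt_of_le_of_lt hq (by linarith)))
  have hvn : 0 < ‖v‖ := norm_pos_iff.2 hv
  have hwn : ‖((0 : E), v)‖ = ‖v‖ := by
    rw [Prod.norm_def]
    simp
  have hbound : |(B q - B (z, z)) (0, v) (0, v)| ≤ ‖B q - B (z, z)‖ * ‖v‖ * ‖v‖ := by
    have := (B q - B (z, z)).le_opNorm₂ ((0 : E), v) ((0 : E), v)
    rwa [Real.norm_eq_abs, hwn] at this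
  have hsub : (B q - B (z, z)) (0, v) (0, v)
      = B q (0, v) (0, v) - B (z, z) (0, v) (0, v) := by
    simp [ContinuousLinearMap.sub_apply]
  have h1 := claim1 v hv
  have h2 : ‖B q - B (z, z)‖ * ‖v‖ * ‖v‖ < c * ‖v‖ ^ 2 := by
    have := mul_lt_mul_of_pos_right (mul_lt_mul_of_pos_right hdB hvn) hvn
    calc ‖B q - B (z, z)‖ * ‖v‖ * ‖v‖ < c * ‖v‖ * ‖v‖ := this
      _ = c * ‖v‖ ^ 2 := by ring
  have habs := abs_lt.1 (lt_of_le_of_lt hbound h2)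
  rw [hsub] at habs
  have hv2 : 0 < c * ‖v‖ ^ 2 := by positivity
  linarith [habs.1, habs.2]

end AuxLemmas

/-- if `u` is weakly persistent at `x₀` with all associated
`𝒦`-functions of finite sensitivity, then the Hessian of the MHE cost is
positive definite on a neighbourhood of `x(t−T)`. -/
theorem stmt5 {nx nu ny : ℕ}
    (f : Vec nx → Vec nu → Vec nx) (h : Vec nx → Vec nu → Vec ny)
    (u : ℝ → Vec nu) (φ : ℝ → ℝ → Vec nx → Vec nx) (x₀ : Vec nx)
    (hf : ContDiff ℝ 2 (Function.uncurry f))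
    (hh : ContDiff ℝ 2 (Function.uncurry h))
    (hflow_init : ∀ s₁ : ℝ, 0 ≤ s₁ → ∀ ξ, φ s₁ s₁ ξ = ξ)
    (hflow_ode : ∀ s₁ s : ℝ, 0 ≤ s₁ → s₁ ≤ s → ∀ ξ,
      HasDerivAt (fun τ => φ τ s₁ ξ) (f (φ s s₁ ξ) (u s)) s)
    (hC2 : ∀ T > (0 : ℝ), ∀ t ≥ T,
      ContDiff ℝ 2 (fun p : Vec nx × Vec nx => cumError h φ u (t - T) t p.1 p.2))
    (hwp : WeaklyPersistentAtFS h φ u x₀) :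
    ∃ T > (0 : ℝ), ∀ t ≥ T, ∃ R > (0 : ℝ),
      ∀ ξ₁ ∈ Metric.closedBall (φ (t - T) 0 x₀) R,
        ∀ ξ₂ ∈ Metric.closedBall (φ (t - T) 0 x₀) R,
          ∀ v : Vec nx, v ≠ 0 → 0 < d2l h φ u (t - T) t ξ₁ ξ₂ v v := by
  obtain ⟨T, hT, hper⟩ := hwp
  refine ⟨T, hT, ?_⟩
  intro t ht
  obtain ⟨R, hR, κ, hκK, ⟨r, hr, c, hc, hsens⟩, hlb⟩ := hper t ht
  set z : Vec nx := φ (t - T) 0 x₀ with hzdef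
  set L : Vec nx × Vec nx → ℝ := fun p => cumError h φ u (t - T) t p.1 p.2 with hLdef
  have hL : ContDiff ℝ 2 L := hC2 T hT t ht
  have hz : L (z, z) = 0 := by
    simp [hLdef, cumError, sub_self]
  have hlb' : ∀ ξ₂ : Vec nx, dist ξ₂ z ≤ min R r → c * ‖z - ξ₂‖ ^ 2 ≤ L (z, ξ₂) := by
    intro ξ₂ hξ₂
    by_cases hzeq : ξ₂ = z
    · subst hzeq
      simp [hz]
    · have hs : 0 < ‖z - ξ₂‖ := by
        rw [norm_pos_iff, sub_ne_zero]
        exact fun hcon => hzeq hcon.symm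
      have hdist : ‖z - ξ₂‖ = dist ξ₂ z := by
        rw [dist_eq_norm, ← norm_neg]
        congr 1
        abel
      have hsr : ‖z - ξ₂‖ ≤ r := by
        rw [hdist]
        exact hξ₂.trans (min_le_right _ _)
      have hκlow : c * ‖z - ξ₂‖ ^ 2 ≤ κ ‖z - ξ₂‖ := by
        have := hsens ‖z - ξ₂‖ hs hsr
        rw [le_div_iff₀ (by positivity)] at this
        linarith
      have hmem1 : z ∈ Metric.closedBall z R := Metric.mem_closedBall_self hR.le
      have hmem2 : ξ₂ ∈ Metric.closedBall z R :=
        Metric.mem_closedBall.2 (hξ₂.trans (min_le_left _ _))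
      have := hlb z hmem1 ξ₂ hmem2
      exact hκlow.trans this
  obtain ⟨R', hR', hpos⟩ := key_lemma L hL z (min R r) c (lt_min hR hr) hc hz hlb'
  refine ⟨R', hR', ?_⟩
  intro ξ₁ hξ₁ ξ₂ hξ₂ v hv
  have hmem : dist ((ξ₁, ξ₂) : Vec nx × Vec nx) (z, z) ≤ R' := by
    rw [Prod.dist_eq]
    exact max_le (Metric.mem_closedBall.1 hξ₁) (Metric.mem_closedBall.1 hξ₂)
  have hkey := hpos (ξ₁, ξ₂) hmem v hv
  have heq := partial_second_eq L hL ξ₁ ξ₂ v v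
  show 0 < iteratedFDeriv ℝ 2 (fun ξ => cumError h φ u (t - T) t ξ₁ ξ) ξ₂ ![v, v]
  rw [show (fun ξ => cumError h φ u (t - T) t ξ₁ ξ) = (fun ξ => L (ξ₁, ξ)) from rfl, heq]
  exact hkey
end

section
/- Assume that for each T > 0 and t ≥ T the map (ξ₁,ξ₂) ↦ l(t−T,t,ξ₁,ξ₂,u) is twice continuously differentiable. Then the following are equivalent: (i) there exists T > 0 such that for all t ≥ T the Observability Grammian C(t,T,x(t−T),u) is positive definite; (ii) there exists T > 0 such that for every t ≥ T there exists R_t > 0 with d²_{ξ₂}l(t−T,t,ξ₁,ξ₂,u) positive definite for all (ξ₁,ξ₂) ∈ B̄(x(t−T),R_t)². -/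
open MeasureTheory Metric Set Filter

lemma key_partial {E : Type*} [NormedAddCommGroup E] [NormedSpace ℝ E]
    (F : E × E → ℝ) (hF : ContDiff ℝ 2 F) (ξ₁ ξ₂ v w : E) :
    iteratedFDeriv ℝ 2 (fun ξ => F (ξ₁, ξ)) ξ₂ ![v, w]
      = fderiv ℝ (fderiv ℝ F) (ξ₁, ξ₂) (0, v) (0, w) := by
  set e : E →L[ℝ] E × E := ContinuousLinearMap.inr ℝ E E with he
  set ψ : ((E × E) →L[ℝ] ℝ) →L[ℝ] (E →L[ℝ] ℝ) :=
    (ContinuousLinearMap.compL ℝ E (E × E) ℝ).flip e with hψ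
  have hA : ∀ ξ : E, fderiv ℝ (fun ξ' => F (ξ₁, ξ')) ξ = ψ (fderiv ℝ F (ξ₁, ξ)) := by
    intro ξ
    have h1 : HasFDerivAt (fun ξ' : E => (ξ₁, ξ')) e ξ := hasFDerivAt_prodMk_right ξ₁ ξ
    have h2 : HasFDerivAt F (fderiv ℝ F (ξ₁, ξ)) (ξ₁, ξ) :=
      (hF.differentiable (by norm_num) (ξ₁, ξ)).hasFDerivAt
    have := (h2.comp ξ h1).fderiv
    exact this
  have hD1 : ContDiff ℝ 1 (fderiv ℝ F) := hF.fderiv_right (by norm_num)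
  have h1 : HasFDerivAt (fun ξ' : E => (ξ₁, ξ')) e ξ₂ := hasFDerivAt_prodMk_right ξ₁ ξ₂
  have h3 : HasFDerivAt (fderiv ℝ F) (fderiv ℝ (fderiv ℝ F) (ξ₁, ξ₂)) (ξ₁, ξ₂) :=
    (hD1.differentiable one_ne_zero (ξ₁, ξ₂)).hasFDerivAt
  have h4 : HasFDerivAt (fun ξ => fderiv ℝ F (ξ₁, ξ))
      ((fderiv ℝ (fderiv ℝ F) (ξ₁, ξ₂)).comp e) ξ₂ := h3.comp ξ₂ h1
  have h5 : HasFDerivAt (fun ξ => ψ (fderiv ℝ F (ξ₁, ξ)))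
      (ψ.comp ((fderiv ℝ (fderiv ℝ F) (ξ₁, ξ₂)).comp e)) ξ₂ :=
    ψ.hasFDerivAt.comp ξ₂ h4
  have heq : (fun ξ => fderiv ℝ (fun ξ' => F (ξ₁, ξ')) ξ)
      = fun ξ => ψ (fderiv ℝ F (ξ₁, ξ)) := funext hA
  rw [iteratedFDeriv_two_apply]
  simp only [Matrix.cons_val_zero, Matrix.cons_val_one, Matrix.head_cons]
  rw [show fderiv ℝ (fderiv ℝ fun ξ => F (ξ₁, ξ)) ξ₂
      = ψ.comp ((fderiv ℝ (fderiv ℝ F) (ξ₁, ξ₂)).comp e) by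
    rw [show (fderiv ℝ fun ξ => F (ξ₁, ξ)) = fun ξ => ψ (fderiv ℝ F (ξ₁, ξ)) from heq]
    exact h5.fderiv]
  rfl

lemma aux_nbhd {E : Type*} [NormedAddCommGroup E] [NormedSpace ℝ E] [ProperSpace E]
    (F : E × E → ℝ) (hF : ContDiff ℝ 2 F) (xb : E)
    (hpos : ∀ v : E, v ≠ 0 → 0 < fderiv ℝ (fderiv ℝ F) (xb, xb) (0, v) (0, v)) :
    ∃ R > (0:ℝ), ∀ ξ₁ ∈ closedBall xb R, ∀ ξ₂ ∈ closedBall xb R, ∀ v : E, v ≠ 0 →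
      0 < fderiv ℝ (fderiv ℝ F) (ξ₁, ξ₂) (0, v) (0, v) := by
  set B : (E × E) × E → ℝ := fun q => fderiv ℝ (fderiv ℝ F) q.1 (0, q.2) (0, q.2) with hB
  have hD1 : ContDiff ℝ 1 (fderiv ℝ F) := hF.fderiv_right (by norm_num)
  have h1 : Continuous (fderiv ℝ (fderiv ℝ F)) := hD1.continuous_fderiv one_ne_zero
  have h2 : Continuous fun q : (E × E) × E => ((0 : E), q.2) :=
    continuous_const.prodMk continuous_snd
  have hBcont : Continuous B := ((h1.comp continuous_fst).clm_apply h2).clm_apply h2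
  have hhom : ∀ p : E × E, ∀ c : ℝ, ∀ w : E, B (p, c • w) = c ^ 2 * B (p, w) := by
    intro p c w
    have h0 : ((0 : E), c • w) = c • ((0 : E), w) := by simp [Prod.smul_mk]
    simp only [hB, h0, _root_.map_smul, ContinuousLinearMap.smul_apply, smul_eq_mul]
    ring
  have hn : IsOpen (B ⁻¹' Ioi 0) := isOpen_Ioi.preimage hBcont
  have hsub : ({((xb, xb) : E × E)} : Set (E × E)) ×ˢ (sphere (0:E) 1) ⊆ B ⁻¹' Ioi 0 := by
    rintro ⟨p, v⟩ ⟨hp, hv⟩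
    simp only [mem_singleton_iff] at hp
    subst hp
    have hv1 : ‖v‖ = 1 := mem_sphere_zero_iff_norm.1 hv
    exact hpos v (by intro h0; rw [h0] at hv1; simp at hv1)
  obtain ⟨U, V, hU, -, hpU, hSV, hUV⟩ :=
    generalized_tube_lemma isCompact_singleton (isCompact_sphere (0:E) 1) hn hsub
  obtain ⟨ε, hε, hball⟩ := Metric.isOpen_iff.1 hU (xb, xb) (hpU rfl)
  refine ⟨ε / 2, by positivity, fun ξ₁ hξ₁ ξ₂ hξ₂ v hv => ?_⟩
  have hp : (ξ₁, ξ₂) ∈ U := by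
    apply hball
    rw [mem_ball, Prod.dist_eq]
    rw [mem_closedBall] at hξ₁ hξ₂
    exact max_lt (by linarith) (by linarith)
  have hvn : ‖v‖ ≠ 0 := norm_ne_zero_iff.2 hv
  have hw : ‖v‖⁻¹ • v ∈ sphere (0:E) 1 := by
    rw [mem_sphere_zero_iff_norm, norm_smul, norm_inv, norm_norm, inv_mul_cancel₀ hvn]
  have hmem : ((ξ₁, ξ₂), ‖v‖⁻¹ • v) ∈ B ⁻¹' Ioi 0 := hUV ⟨hp, hSV hw⟩
  have hBpos : 0 < B ((ξ₁, ξ₂), ‖v‖⁻¹ • v) := hmem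
  have hveq : v = ‖v‖ • (‖v‖⁻¹ • v) := by rw [smul_smul, mul_inv_cancel₀ hvn, one_smul]
  have : (0:ℝ) < B ((ξ₁, ξ₂), v) := by
    rw [hveq, hhom]
    positivity
  exact this

/-- Observability Grammian as a bilinear form:
`C(t,T,x(t−T),u)(v,w) = ½ d²_{ξ₂}l(t−T,t,x(t−T),x(t−T),u)(v,w)`. -/
noncomputable def grammian {nx nu ny : ℕ}
    (h : Vec nx → Vec nu → Vec ny) (φ : ℝ → ℝ → Vec nx → Vec nx)
    (u : ℝ → Vec nu) (x₀ : Vec nx) (t T : ℝ) (v w : Vec nx) : ℝ :=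
  (1 / 2) * d2l h φ u (t - T) t (φ (t - T) 0 x₀) (φ (t - T) 0 x₀) v w

/-- positive definiteness of the Observability Grammian at `x(t−T)`
for all `t ≥ T` is equivalent to positive definiteness of the Hessian of the MHE
cost in a neighbourhood of `x(t−T)`. -/
theorem stmt6 {nx nu ny : ℕ}
    (f : Vec nx → Vec nu → Vec nx) (h : Vec nx → Vec nu → Vec ny)
    (u : ℝ → Vec nu) (φ : ℝ → ℝ → Vec nx → Vec nx) (x₀ : Vec nx)
    (hf : ContDiff ℝ 2 (Function.uncurry f))
    (hh : ContDiff ℝ 2 (Function.uncurry h))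
    (hflow_init : ∀ s₁ : ℝ, 0 ≤ s₁ → ∀ ξ, φ s₁ s₁ ξ = ξ)
    (hflow_ode : ∀ s₁ s : ℝ, 0 ≤ s₁ → s₁ ≤ s → ∀ ξ,
      HasDerivAt (fun τ => φ τ s₁ ξ) (f (φ s s₁ ξ) (u s)) s)
    (hC2 : ∀ T > (0 : ℝ), ∀ t ≥ T,
      ContDiff ℝ 2 (fun p : Vec nx × Vec nx => cumError h φ u (t - T) t p.1 p.2)) :
    (∃ T > (0 : ℝ), ∀ t ≥ T,
        ∀ v : Vec nx, v ≠ 0 → 0 < grammian h φ u x₀ t T v v) ↔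
      (∃ T > (0 : ℝ), ∀ t ≥ T, ∃ R > (0 : ℝ),
        ∀ ξ₁ ∈ Metric.closedBall (φ (t - T) 0 x₀) R,
          ∀ ξ₂ ∈ Metric.closedBall (φ (t - T) 0 x₀) R,
            ∀ v : Vec nx, v ≠ 0 → 0 < d2l h φ u (t - T) t ξ₁ ξ₂ v v) := by
  have key : ∀ T > (0:ℝ), ∀ t ≥ T, ∀ ξ₁ ξ₂ v w : Vec nx,
      d2l h φ u (t - T) t ξ₁ ξ₂ v w
        = fderiv ℝ (fderiv ℝ (fun p : Vec nx × Vec nx => cumError h φ u (t - T) t p.1 p.2))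
            (ξ₁, ξ₂) (0, v) (0, w) := by
    intro T hT t ht ξ₁ ξ₂ v w
    exact key_partial _ (hC2 T hT t ht) ξ₁ ξ₂ v w
  constructor
  · rintro ⟨T, hT, H⟩
    refine ⟨T, hT, fun t ht => ?_⟩
    have hF := hC2 T hT t ht
    obtain ⟨R, hR, hball⟩ := aux_nbhd _ hF (φ (t - T) 0 x₀) (fun v hv => by
      have := H t ht v hv
      rw [grammian] at this
      have h2 : 0 < d2l h φ u (t - T) t (φ (t - T) 0 x₀) (φ (t - T) 0 x₀) v v := by linarith
      rwa [key T hT t ht] at h2)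
    refine ⟨R, hR, fun ξ₁ hξ₁ ξ₂ hξ₂ v hv => ?_⟩
    rw [key T hT t ht]
    exact hball ξ₁ hξ₁ ξ₂ hξ₂ v hv
  · rintro ⟨T, hT, H⟩
    refine ⟨T, hT, fun t ht v hv => ?_⟩
    obtain ⟨R, hR, hball⟩ := H t ht
    have hc : φ (t - T) 0 x₀ ∈ Metric.closedBall (φ (t - T) 0 x₀) R :=
      Metric.mem_closedBall_self hR.le
    have := hball _ hc _ hc v hv
    rw [grammian]
    linarith
end

section
/- Assume that for each T > 0 and t ≥ T the map (ξ₁,ξ₂) ↦ l(t−T,t,ξ₁,ξ₂,u) is twice continuously differentiable. If there exist T > 0, μ > 0 and R > 0 such that for all t ≥ T and all (ξ₁,ξ₂) ∈ B̄(x(t−T),R)² one has d²_{ξ₂}l(t−T,t,ξ₁,ξ₂,u)(v,v) ≥ μ‖v‖² for all v ∈ ℝ^{n_x}, then u is weakly regularly persistent at x₀; indeed l(t−T,t,ξ₁,ξ₂,u) ≥ (μ/2)‖ξ₁−ξ₂‖² for all t ≥ T and all ξ₁, ξ₂ ∈ B̄(x(t−T),R). -/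
open MeasureTheory Metric Set Filter

/-- Weakly regularly persistent input trajectory at `x₀`. -/
def WeaklyRegularlyPersistentAt {nx nu ny : ℕ}
    (h : Vec nx → Vec nu → Vec ny) (φ : ℝ → ℝ → Vec nx → Vec nx)
    (u : ℝ → Vec nu) (x₀ : Vec nx) : Prop :=
  ∃ T > (0 : ℝ), ∃ R > (0 : ℝ), ∃ κ : ℝ → ℝ, IsKFunction κ ∧
    ∀ t ≥ T, ∀ ξ₁ ∈ Metric.closedBall (φ (t - T) 0 x₀) R,
      ∀ ξ₂ ∈ Metric.closedBall (φ (t - T) 0 x₀) R,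
        κ ‖ξ₁ - ξ₂‖ ≤ cumError h φ u (t - T) t ξ₁ ξ₂

lemma key_quad {n : ℕ} (g : Vec n → ℝ) (hg : ContDiff ℝ 2 g) (μ : ℝ)
    (ξ₁ ξ₂ : Vec n) (S : Set (Vec n)) (hconv : Convex ℝ S)
    (h1 : ξ₁ ∈ S) (h2 : ξ₂ ∈ S)
    (hhess : ∀ x ∈ S, ∀ v : Vec n, μ * ‖v‖ ^ 2 ≤ iteratedFDeriv ℝ 2 g x ![v, v])
    (h0 : g ξ₁ = 0) (hd0 : fderiv ℝ g ξ₁ = 0) :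
    μ / 2 * ‖ξ₁ - ξ₂‖ ^ 2 ≤ g ξ₂ := by
  set v : Vec n := ξ₂ - ξ₁ with hv
  set L : ℝ → Vec n := fun s => ξ₁ + s • v with hL
  have hLmem : ∀ s ∈ Set.Icc (0:ℝ) 1, L s ∈ S := by
    intro s hs
    have : L s = (1 - s) • ξ₁ + s • ξ₂ := by
      simp only [hL, hv]; rw [sub_smul, one_smul, smul_sub]; abel
    rw [this]
    exact hconv h1 h2 (by linarith [hs.2]) hs.1 (by ring)
  have hLd : ∀ s : ℝ, HasDerivAt L v s := by
    intro s
    have := ((hasDerivAt_id s).smul_const v).const_add ξ₁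
    rw [one_smul] at this; exact this
  set ψ : ℝ → ℝ := fun s => g (L s) with hψdef
  set ψ1 : ℝ → ℝ := fun s => fderiv ℝ g (L s) v with hψ1def
  have hgd : Differentiable ℝ g := hg.differentiable (by norm_num)
  have hF : ContDiff ℝ 1 (fderiv ℝ g) := hg.fderiv_right (by norm_num)
  have hψd : ∀ s : ℝ, HasDerivAt ψ (ψ1 s) s := fun s =>
    (hgd (L s)).hasFDerivAt.comp_hasDerivAt s (hLd s)
  have hψ1d : ∀ s : ℝ, HasDerivAt ψ1 (iteratedFDeriv ℝ 2 g (L s) ![v, v]) s := by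
    intro s
    have hFd : HasFDerivAt (fderiv ℝ g) (fderiv ℝ (fderiv ℝ g) (L s)) (L s) :=
      (hF.differentiable (by norm_num) (L s)).hasFDerivAt
    have happ : HasFDerivAt (fun x => fderiv ℝ g x v)
        (((fderiv ℝ g (L s)).comp (0 : Vec n →L[ℝ] Vec n)) +
          (fderiv ℝ (fderiv ℝ g) (L s)).flip v) (L s) :=
      hFd.clm_apply (hasFDerivAt_const v (L s))
    have := happ.comp_hasDerivAt s (hLd s)
    have h2a : iteratedFDeriv ℝ 2 g (L s) ![v, v] =
        fderiv ℝ (fderiv ℝ g) (L s) v v := by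
      rw [iteratedFDeriv_two_apply]; rfl
    rw [h2a]
    simp at this; exact this
  set c : ℝ := μ * ‖v‖ ^ 2 with hc
  set θ1 : ℝ → ℝ := fun s => ψ1 s - ψ1 0 - c * s with hθ1
  set θ : ℝ → ℝ := fun s => ψ s - ψ 0 - s * ψ1 0 - c * s ^ 2 / 2 with hθ
  have hθd : ∀ s : ℝ, HasDerivAt θ (θ1 s) s := by
    intro s
    have h1' : HasDerivAt (fun s : ℝ => s * ψ1 0) (ψ1 0) s := by
      simpa using (hasDerivAt_id s).mul_const (ψ1 0)
    have h2' : HasDerivAt (fun s : ℝ => c * s ^ 2 / 2) (c * s) s := by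
      have := ((hasDerivAt_pow 2 s).const_mul c).div_const 2
      exact this.congr_deriv (by norm_num; ring)
    have := (((hψd s).sub_const (ψ 0)).sub h1').sub h2'
    exact this
  have hθ1d : ∀ s : ℝ, HasDerivAt θ1 (iteratedFDeriv ℝ 2 g (L s) ![v, v] - c) s := by
    intro s
    have h2' : HasDerivAt (fun s : ℝ => c * s) c s := by
      simpa using (hasDerivAt_id s).const_mul c
    exact ((hψ1d s).sub_const (ψ1 0)).sub h2'
  -- θ1 monotone on [0,1]
  have hθ1mono : MonotoneOn θ1 (Set.Icc 0 1) := by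
    apply monotoneOn_of_deriv_nonneg (convex_Icc 0 1)
    · exact (fun s _ => (hθ1d s).differentiableAt.continuousAt.continuousWithinAt)
    · exact fun s _ => ((hθ1d s).differentiableAt).differentiableWithinAt
    · intro s hs
      rw [interior_Icc] at hs
      rw [(hθ1d s).deriv]
      have := hhess (L s) (hLmem s ⟨hs.1.le, hs.2.le⟩) v
      simp only [hc]
      linarith
  have hθ10 : θ1 0 = 0 := by simp [θ1]
  have hθ1nonneg : ∀ s ∈ Set.Icc (0:ℝ) 1, 0 ≤ θ1 s := by
    intro s hs
    have := hθ1mono (Set.left_mem_Icc.mpr zero_le_one) hs hs.1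
    rwa [hθ10] at this
  have hθmono : MonotoneOn θ (Set.Icc 0 1) := by
    apply monotoneOn_of_deriv_nonneg (convex_Icc 0 1)
    · exact (fun s _ => (hθd s).differentiableAt.continuousAt.continuousWithinAt)
    · exact fun s _ => ((hθd s).differentiableAt).differentiableWithinAt
    · intro s hs
      rw [interior_Icc] at hs
      rw [(hθd s).deriv]
      exact hθ1nonneg s ⟨hs.1.le, hs.2.le⟩
  have hfin := hθmono (Set.left_mem_Icc.mpr zero_le_one) (Set.right_mem_Icc.mpr zero_le_one) zero_le_one
  have hθ0 : θ 0 = 0 := by simp [θ]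
  rw [hθ0] at hfin
  have hψ0 : ψ 0 = 0 := by simp [ψ, L, h0]
  have hψ1_0 : ψ1 0 = 0 := by simp [ψ1, L, hd0]
  have hψ1' : ψ 1 = g ξ₂ := by simp [ψ, L, hv]
  have hnorm : ‖ξ₁ - ξ₂‖ = ‖v‖ := by rw [hv, norm_sub_rev]
  simp only [θ, hψ0, hψ1_0, hψ1'] at hfin
  rw [hnorm, hc] at *
  nlinarith [hfin]


/-- a time-uniform lower bound `μ‖v‖²` on the Hessian of the MHE cost
near `x(t−T)` implies weak regular persistence, with the explicit quadratic
lower bound `l ≥ (μ/2)‖ξ₁−ξ₂‖²`. -/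
theorem stmt8 {nx nu ny : ℕ}
    (f : Vec nx → Vec nu → Vec nx) (h : Vec nx → Vec nu → Vec ny)
    (u : ℝ → Vec nu) (φ : ℝ → ℝ → Vec nx → Vec nx) (x₀ : Vec nx)
    (hf : ContDiff ℝ 2 (Function.uncurry f))
    (hh : ContDiff ℝ 2 (Function.uncurry h))
    (hflow_init : ∀ s₁ : ℝ, 0 ≤ s₁ → ∀ ξ, φ s₁ s₁ ξ = ξ)
    (hflow_ode : ∀ s₁ s : ℝ, 0 ≤ s₁ → s₁ ≤ s → ∀ ξ,
      HasDerivAt (fun τ => φ τ s₁ ξ) (f (φ s s₁ ξ) (u s)) s)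
    (hC2 : ∀ T > (0 : ℝ), ∀ t ≥ T,
      ContDiff ℝ 2 (fun p : Vec nx × Vec nx => cumError h φ u (t - T) t p.1 p.2))
    (T μ R : ℝ) (hT : 0 < T) (hμ : 0 < μ) (hR : 0 < R)
    (hlb : ∀ t ≥ T, ∀ ξ₁ ∈ Metric.closedBall (φ (t - T) 0 x₀) R,
      ∀ ξ₂ ∈ Metric.closedBall (φ (t - T) 0 x₀) R,
        ∀ v : Vec nx, μ * ‖v‖ ^ 2 ≤ d2l h φ u (t - T) t ξ₁ ξ₂ v v) :
    WeaklyRegularlyPersistentAt h φ u x₀ ∧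
    ∀ t ≥ T, ∀ ξ₁ ∈ Metric.closedBall (φ (t - T) 0 x₀) R,
      ∀ ξ₂ ∈ Metric.closedBall (φ (t - T) 0 x₀) R,
        (μ / 2) * ‖ξ₁ - ξ₂‖ ^ 2 ≤ cumError h φ u (t - T) t ξ₁ ξ₂ := by
  have main : ∀ t ≥ T, ∀ ξ₁ ∈ Metric.closedBall (φ (t - T) 0 x₀) R,
      ∀ ξ₂ ∈ Metric.closedBall (φ (t - T) 0 x₀) R,
        (μ / 2) * ‖ξ₁ - ξ₂‖ ^ 2 ≤ cumError h φ u (t - T) t ξ₁ ξ₂ := by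
    intro t ht ξ₁ hξ₁ ξ₂ hξ₂
    set g : Vec nx → ℝ := fun ξ => cumError h φ u (t - T) t ξ₁ ξ with hg
    have hgC2 : ContDiff ℝ 2 g := by
      have h2 : ContDiff ℝ 2 (fun ξ : Vec nx => (ξ₁, ξ)) := contDiff_const.prodMk contDiff_id
      have h3 := (hC2 T hT t ht).comp h2
      exact h3
    have hnn : ∀ ξ, 0 ≤ g ξ := by
      intro ξ
      apply intervalIntegral.integral_nonneg (by linarith : t - T ≤ t)
      intro s _
      positivity
    have h0 : g ξ₁ = 0 := by
      simp [g, cumError, sub_self]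
    have hd0 : fderiv ℝ g ξ₁ = 0 := by
      apply IsLocalMin.fderiv_eq_zero
      exact Filter.Eventually.of_forall fun x => h0 ▸ hnn x
    have hhess : ∀ x ∈ Metric.closedBall (φ (t - T) 0 x₀) R,
        ∀ v : Vec nx, μ * ‖v‖ ^ 2 ≤ iteratedFDeriv ℝ 2 g x ![v, v] :=
      fun x hx v => hlb t ht ξ₁ hξ₁ x hx v
    exact key_quad g hgC2 μ ξ₁ ξ₂ _ (convex_closedBall _ _) hξ₁ hξ₂ hhess h0 hd0
  refine ⟨⟨T, hT, R, hR, fun r => μ / 2 * r ^ 2, ⟨?_, ?_, by norm_num⟩, ?_⟩, main⟩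
  · exact (Continuous.continuousOn (by continuity))
  · intro a ha b hb hab
    have : a ^ 2 < b ^ 2 := pow_lt_pow_left₀ hab ha (by norm_num)
    have hμ2 : (0:ℝ) < μ / 2 := by linarith
    exact mul_lt_mul_of_pos_left this hμ2
  · exact main
end

section
/- (Uniform Implicit Function Theorem on Banach spaces, existence and uniqueness.) Under assumptions (i)–(vii), for every t ∈ J there exists a unique map φ_t : B(x_{0,t},δ) → B̄(y_{0,t},ε) such that F(t,x,φ_t(x)) = 0 for all x ∈ B(x_{0,t},δ); moreover φ_t(x_{0,t}) = y_{0,t} and φ_t is continuous. -/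
open Metric Set

variable {J : Type*} {X Y Z : Type*}
  [NormedAddCommGroup X] [NormedSpace ℝ X] [CompleteSpace X]
  [NormedAddCommGroup Y] [NormedSpace ℝ Y] [CompleteSpace Y]
  [NormedAddCommGroup Z] [NormedSpace ℝ Z] [CompleteSpace Z]

/-- Uniform Implicit Function Theorem on Banach spaces with explicit
neighbourhoods — existence and uniqueness of the family of implicit maps. -/
theorem stmt13
    (Ω : Set (X × Y)) (hΩ : IsOpen Ω)
    (F : J → X → Y → Z) (x₀ : J → X) (y₀ : J → Y)
    (ε δ L α : ℝ) (hε : 0 < ε) (hδ : 0 < δ) (hL : 0 < L) (hα0 : 0 < α) (hα1 : α < 1)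
    -- (i)
    (hS : ∀ t : J, (Metric.ball (x₀ t) δ) ×ˢ (Metric.closedBall (y₀ t) ε) ⊆ Ω)
    -- (ii)
    (hF0 : ∀ t : J, F t (x₀ t) (y₀ t) = 0)
    -- (iii)
    (hC1 : ∀ t : J, ContDiffOn ℝ 1 (fun p : X × Y => F t p.1 p.2) Ω)
    -- (iv): d_yF(t,x₀ₜ,y₀ₜ) is invertible with inverse Γ t of norm at most L
    (Γ : J → (Z →L[ℝ] Y))
    (hΓ_left : ∀ t : J,
      (Γ t).comp (fderiv ℝ (fun y => F t (x₀ t) y) (y₀ t)) = ContinuousLinearMap.id ℝ Y)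
    (hΓ_right : ∀ t : J,
      (fderiv ℝ (fun y => F t (x₀ t) y) (y₀ t)).comp (Γ t) = ContinuousLinearMap.id ℝ Z)
    (hΓ_norm : ∀ t : J, ‖Γ t‖ ≤ L)
    -- (v)
    (g₁ : ℝ → ℝ → ℝ)
    (hg₁_mono₁ : ∀ s ∈ Icc (0 : ℝ) ε, MonotoneOn (fun r => g₁ r s) (Icc (0 : ℝ) δ))
    (hg₁_mono₂ : ∀ r ∈ Icc (0 : ℝ) δ, MonotoneOn (fun s => g₁ r s) (Icc (0 : ℝ) ε))
    (hg₁ : ∀ t : J, ∀ x ∈ Metric.ball (x₀ t) δ, ∀ y ∈ Metric.closedBall (y₀ t) ε,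
      ‖fderiv ℝ (fun y' => F t x y') y - fderiv ℝ (fun y' => F t (x₀ t) y') (y₀ t)‖ ≤
        g₁ ‖x - x₀ t‖ ‖y - y₀ t‖)
    -- (vi)
    (g₂ : ℝ → ℝ) (hg₂_mono : MonotoneOn g₂ (Icc (0 : ℝ) δ))
    (hg₂ : ∀ t : J, ∀ x ∈ Metric.ball (x₀ t) δ, ‖F t x (y₀ t)‖ ≤ g₂ ‖x - x₀ t‖)
    -- (vii)
    (hcond₁ : L * g₁ δ ε ≤ α) (hcond₂ : L * g₂ δ ≤ ε * (1 - α)) :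
    ∀ t : J, ∃ ψ : X → Y,
      (∀ x ∈ Metric.ball (x₀ t) δ,
        ψ x ∈ Metric.closedBall (y₀ t) ε ∧ F t x (ψ x) = 0) ∧
      ψ (x₀ t) = y₀ t ∧
      ContinuousOn ψ (Metric.ball (x₀ t) δ) ∧
      (∀ ψ' : X → Y,
        (∀ x ∈ Metric.ball (x₀ t) δ,
          ψ' x ∈ Metric.closedBall (y₀ t) ε ∧ F t x (ψ' x) = 0) →
        ∀ x ∈ Metric.ball (x₀ t) δ, ψ' x = ψ x) := by
  intro t
  set D : Y →L[ℝ] Z := fderiv ℝ (fun y => F t (x₀ t) y) (y₀ t) with hDdef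
  set C : Set Y := Metric.closedBall (y₀ t) ε with hCdef
  have hy₀C : y₀ t ∈ C := mem_closedBall_self hε.le
  have hx₀ : x₀ t ∈ Metric.ball (x₀ t) δ := mem_ball_self hδ
  have hsub : ∀ x ∈ Metric.ball (x₀ t) δ, ∀ y ∈ C, (x, y) ∈ Ω :=
    fun x hx y hy => hS t ⟨hx, hy⟩
  have hΓD : ∀ w : Y, Γ t (D w) = w := by
    intro w
    have := congrArg (fun f : Y →L[ℝ] Y => f w) (hΓ_left t)
    simpa using this
  have hDΓ : ∀ z : Z, D (Γ t z) = z := by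
    intro z
    have := congrArg (fun f : Z →L[ℝ] Z => f z) (hΓ_right t)
    simpa using this
  have hΓinj : ∀ z : Z, Γ t z = 0 → z = 0 := by
    intro z hz
    have := hDΓ z
    rw [hz, map_zero] at this
    exact this.symm
  -- differentiability of the partial map
  have hdiff : ∀ x ∈ Metric.ball (x₀ t) δ, ∀ y ∈ C,
      DifferentiableAt ℝ (fun y' => F t x y') y := by
    intro x hx y hy
    have hjoint : DifferentiableAt ℝ (fun p : X × Y => F t p.1 p.2) (x, y) :=
      ((hC1 t).differentiableOn one_ne_zero).differentiableAt (hΩ.mem_nhds (hsub x hx y hy))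
    exact hjoint.comp y ((differentiableAt_const x).prodMk differentiableAt_id)
  have hg₁nn : (0 : ℝ) ≤ g₁ δ ε := by
    have h0 := hg₁ t (x₀ t) hx₀ (y₀ t) hy₀C
    simp only [sub_self, norm_zero] at h0
    have h1 : g₁ 0 0 ≤ g₁ δ 0 :=
      hg₁_mono₁ 0 ⟨le_rfl, hε.le⟩ ⟨le_rfl, hδ.le⟩ ⟨hδ.le, le_rfl⟩ hδ.le
    have h2 : g₁ δ 0 ≤ g₁ δ ε :=
      hg₁_mono₂ δ ⟨hδ.le, le_rfl⟩ ⟨le_rfl, hε.le⟩ ⟨hε.le, le_rfl⟩ hε.le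
    have h3 : (0:ℝ) ≤ g₁ 0 0 := h0
    linarith
  -- mean value estimate
  have hmvt : ∀ x ∈ Metric.ball (x₀ t) δ, ∀ y₁ ∈ C, ∀ y₂ ∈ C,
      ‖F t x y₁ - F t x y₂ - D (y₁ - y₂)‖ ≤ g₁ δ ε * ‖y₁ - y₂‖ := by
    intro x hx y₁ hy₁ y₂ hy₂
    have hxδ : ‖x - x₀ t‖ ≤ δ := by
      have := mem_ball_iff_norm.mp hx; linarith
    refine (convex_closedBall (y₀ t) ε).norm_image_sub_le_of_norm_hasFDerivWithin_le'
      (f' := fun y => fderiv ℝ (fun y' => F t x y') y)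
      (fun y hy => ((hdiff x hx y hy).hasFDerivAt).hasFDerivWithinAt)
      (fun y hy => ?_) hy₂ hy₁
    have h1 := hg₁ t x hx y hy
    have hyε : ‖y - y₀ t‖ ≤ ε := mem_closedBall_iff_norm.mp hy
    have h2 : g₁ ‖x - x₀ t‖ ‖y - y₀ t‖ ≤ g₁ δ ‖y - y₀ t‖ :=
      hg₁_mono₁ _ ⟨norm_nonneg _, hyε⟩ ⟨norm_nonneg _, hxδ⟩ ⟨hδ.le, le_rfl⟩ hxδ
    have h3 : g₁ δ ‖y - y₀ t‖ ≤ g₁ δ ε :=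
      hg₁_mono₂ δ ⟨hδ.le, le_rfl⟩ ⟨norm_nonneg _, hyε⟩ ⟨hε.le, le_rfl⟩ hyε
    linarith
  -- contraction estimate
  have key : ∀ x ∈ Metric.ball (x₀ t) δ, ∀ y₁ ∈ C, ∀ y₂ ∈ C,
      ‖(y₁ - Γ t (F t x y₁)) - (y₂ - Γ t (F t x y₂))‖ ≤ α * ‖y₁ - y₂‖ := by
    intro x hx y₁ hy₁ y₂ hy₂
    have hv := hmvt x hx y₁ hy₁ y₂ hy₂
    have heq : (y₁ - Γ t (F t x y₁)) - (y₂ - Γ t (F t x y₂)) =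
        -(Γ t (F t x y₁ - F t x y₂ - D (y₁ - y₂))) := by
      simp only [map_sub, hΓD]
      abel
    rw [heq, norm_neg]
    calc ‖Γ t (F t x y₁ - F t x y₂ - D (y₁ - y₂))‖
        ≤ ‖Γ t‖ * ‖F t x y₁ - F t x y₂ - D (y₁ - y₂)‖ := (Γ t).le_opNorm _
      _ ≤ L * (g₁ δ ε * ‖y₁ - y₂‖) := by
          apply mul_le_mul (hΓ_norm t) hv (norm_nonneg _) hL.le
      _ ≤ α * ‖y₁ - y₂‖ := by
          rw [← mul_assoc]
          exact mul_le_mul_of_nonneg_right hcond₁ (norm_nonneg _)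
  -- the map sends C into C
  have hself : ∀ x ∈ Metric.ball (x₀ t) δ, ∀ y ∈ C, y - Γ t (F t x y) ∈ C := by
    intro x hx y hy
    have h1 := key x hx y hy (y₀ t) hy₀C
    have h2 : ‖Γ t (F t x (y₀ t))‖ ≤ L * g₂ ‖x - x₀ t‖ :=
      le_trans ((Γ t).le_opNorm _)
        (mul_le_mul (hΓ_norm t) (hg₂ t x hx) (norm_nonneg _) hL.le)
    have hxδ : ‖x - x₀ t‖ ≤ δ := by
      have := mem_ball_iff_norm.mp hx; linarith
    have h3 : g₂ ‖x - x₀ t‖ ≤ g₂ δ :=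
      hg₂_mono ⟨norm_nonneg _, hxδ⟩ ⟨hδ.le, le_rfl⟩ hxδ
    have hyε : ‖y - y₀ t‖ ≤ ε := mem_closedBall_iff_norm.mp hy
    rw [hCdef, mem_closedBall_iff_norm]
    have htri : ‖y - Γ t (F t x y) - y₀ t‖ ≤
        ‖(y - Γ t (F t x y)) - (y₀ t - Γ t (F t x (y₀ t)))‖ + ‖Γ t (F t x (y₀ t))‖ := by
      have : y - Γ t (F t x y) - y₀ t =
          ((y - Γ t (F t x y)) - (y₀ t - Γ t (F t x (y₀ t)))) + (-(Γ t (F t x (y₀ t)))) := by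
        abel
      rw [this]
      exact (norm_add_le _ _).trans (by rw [norm_neg])
    have hLg : L * g₂ ‖x - x₀ t‖ ≤ L * g₂ δ := mul_le_mul_of_nonneg_left h3 hL.le
    nlinarith [h1, h2, htri]
  -- existence and uniqueness via Banach fixed point, for each x
  have exun : ∀ x ∈ Metric.ball (x₀ t) δ,
      ∃ y, y ∈ C ∧ F t x y = 0 ∧ ∀ y' ∈ C, F t x y' = 0 → y' = y := by
    intro x hx
    haveI : Nonempty ↥C := ⟨⟨y₀ t, hy₀C⟩⟩
    haveI : CompleteSpace ↥C := (Metric.isClosed_closedBall (x := y₀ t) (ε := ε)).completeSpace_coe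
    set T : ↥C → ↥C := fun y => ⟨y.1 - Γ t (F t x y.1), hself x hx y.1 y.2⟩ with hT
    have hcontr : ContractingWith α.toNNReal T := by
      constructor
      · exact_mod_cast Real.toNNReal_lt_one.mpr hα1
      · apply LipschitzWith.of_dist_le_mul
        intro y₁ y₂
        have := key x hx y₁.1 y₁.2 y₂.1 y₂.2
        simp only [Subtype.dist_eq, dist_eq_norm, hT]
        rw [Real.coe_toNNReal α hα0.le]
        exact this
    refine ⟨(hcontr.fixedPoint T).1, (hcontr.fixedPoint T).2, ?_, ?_⟩
    · have hfix := hcontr.fixedPoint_isFixedPt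
      have : (hcontr.fixedPoint T).1 - Γ t (F t x (hcontr.fixedPoint T).1) =
          (hcontr.fixedPoint T).1 := congrArg Subtype.val hfix
      have hΓ0 : Γ t (F t x (hcontr.fixedPoint T).1) = 0 := by
        have := sub_eq_self.mp this
        exact this
      exact hΓinj _ hΓ0
    · intro y' hy' hFy'
      have hfix' : Function.IsFixedPt T ⟨y', hy'⟩ := by
        apply Subtype.ext
        show y' - Γ t (F t x y') = y'
        rw [hFy', map_zero, sub_zero]
      have := hcontr.fixedPoint_unique hfix'
      exact congrArg Subtype.val this
  choose! ψ hψC hψF hψU using exun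
  refine ⟨ψ, fun x hx => ⟨hψC x hx, hψF x hx⟩, ?_, ?_, ?_⟩
  · exact (hψU (x₀ t) hx₀ (y₀ t) hy₀C (hF0 t)).symm
  · -- continuity
    have hbound : ∀ x ∈ Metric.ball (x₀ t) δ, ∀ x' ∈ Metric.ball (x₀ t) δ,
        ‖ψ x - ψ x'‖ ≤ L / (1 - α) * ‖F t x (ψ x')‖ := by
      intro x hx x' hx'
      have h1 := key x hx (ψ x) (hψC x hx) (ψ x') (hψC x' hx')
      rw [hψF x hx, map_zero, sub_zero] at h1
      have htri : ‖ψ x - ψ x'‖ ≤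
          ‖ψ x - (ψ x' - Γ t (F t x (ψ x')))‖ + ‖Γ t (F t x (ψ x'))‖ := by
        have : ψ x - ψ x' = (ψ x - (ψ x' - Γ t (F t x (ψ x')))) + (-(Γ t (F t x (ψ x')))) := by
          abel
        rw [this]
        exact (norm_add_le _ _).trans (by rw [norm_neg])
      have h2 : ‖Γ t (F t x (ψ x'))‖ ≤ L * ‖F t x (ψ x')‖ :=
        le_trans ((Γ t).le_opNorm _)
          (mul_le_mul_of_nonneg_right (hΓ_norm t) (norm_nonneg _))
      have h1α : (0:ℝ) < 1 - α := by linarith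
      rw [div_mul_eq_mul_div, le_div_iff₀ h1α]
      nlinarith [h1, h2, htri]
    have hcontAt : ∀ x' ∈ Metric.ball (x₀ t) δ, ContinuousAt ψ x' := by
      intro x' hx'
      have hFcont : ContinuousAt (fun x => F t x (ψ x')) x' := by
        have hjc : ContinuousAt (fun p : X × Y => F t p.1 p.2) (x', ψ x') :=
          ((hC1 t).continuousOn).continuousAt (hΩ.mem_nhds (hsub x' hx' (ψ x') (hψC x' hx')))
        have hin : ContinuousAt (fun x : X => (x, ψ x')) x' :=
          (continuous_id.prodMk continuous_const).continuousAt
        exact hjc.tendsto.comp hin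
      have hF0' : F t x' (ψ x') = 0 := hψF x' hx'
      have htend : Filter.Tendsto (fun x => L / (1 - α) * ‖F t x (ψ x')‖)
          (nhds x') (nhds 0) := by
        have h1 : Filter.Tendsto (fun x => ‖F t x (ψ x')‖) (nhds x') (nhds 0) := by
          have := hFcont.norm.tendsto
          rw [hF0', norm_zero] at this
          exact this
        have := h1.const_mul (L / (1 - α))
        simpa using this
      rw [ContinuousAt, tendsto_iff_dist_tendsto_zero]
      apply squeeze_zero' (Filter.Eventually.of_forall fun _ => dist_nonneg) ?_ htend
      filter_upwards [isOpen_ball.mem_nhds hx'] with x hx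
      rw [dist_eq_norm]
      exact hbound x hx x' hx'
    exact fun x hx => (hcontAt x hx).continuousWithinAt
  · intro ψ' hψ' x hx
    exact hψU x hx (ψ' x) (hψ' x hx).1 (hψ' x hx).2
end

section
/- (Uniform Implicit Function Theorem on Banach spaces, differentiability.) Under assumptions (i)–(vii), let φ_t : B(x_{0,t},δ) → B̄(y_{0,t},ε) be the unique map with F(t,x,φ_t(x)) = 0 for all x ∈ B(x_{0,t},δ). Then for every t ∈ J and every x ∈ B(x_{0,t},δ): the operator d_yF(t,x,φ_t(x)) : Y → Z is invertible with ‖(d_yF(t,x,φ_t(x)))^{-1}‖ ≤ L/(1 − L g₁(δ,ε)); and φ_t is continuously Fréchet differentiable on B(x_{0,t},δ) with dφ_t(x) = −(d_yF(t,x,φ_t(x)))^{-1} ∘ d_xF(t,x,φ_t(x)). -/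
open Metric Set

variable {J : Type*} {X Y Z : Type*}
  [NormedAddCommGroup X] [NormedSpace ℝ X] [CompleteSpace X]
  [NormedAddCommGroup Y] [NormedSpace ℝ Y] [CompleteSpace Y]
  [NormedAddCommGroup Z] [NormedSpace ℝ Z] [CompleteSpace Z]

open Filter Topology ContinuousLinearMap

/-- Uniform Implicit Function Theorem on Banach spaces —
differentiability of the implicit maps, with the uniform bound on the inverse of
the partial derivative and the formula for the derivative. -/
theorem stmt14
    (Ω : Set (X × Y)) (hΩ : IsOpen Ω)
    (F : J → X → Y → Z) (x₀ : J → X) (y₀ : J → Y)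
    (ε δ L α : ℝ) (hε : 0 < ε) (hδ : 0 < δ) (hL : 0 < L) (hα0 : 0 < α) (hα1 : α < 1)
    (hS : ∀ t : J, (Metric.ball (x₀ t) δ) ×ˢ (Metric.closedBall (y₀ t) ε) ⊆ Ω)
    (hF0 : ∀ t : J, F t (x₀ t) (y₀ t) = 0)
    (hC1 : ∀ t : J, ContDiffOn ℝ 1 (fun p : X × Y => F t p.1 p.2) Ω)
    (Γ : J → (Z →L[ℝ] Y))
    (hΓ_left : ∀ t : J,
      (Γ t).comp (fderiv ℝ (fun y => F t (x₀ t) y) (y₀ t)) = ContinuousLinearMap.id ℝ Y)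
    (hΓ_right : ∀ t : J,
      (fderiv ℝ (fun y => F t (x₀ t) y) (y₀ t)).comp (Γ t) = ContinuousLinearMap.id ℝ Z)
    (hΓ_norm : ∀ t : J, ‖Γ t‖ ≤ L)
    (g₁ : ℝ → ℝ → ℝ)
    (hg₁_mono₁ : ∀ s ∈ Icc (0 : ℝ) ε, MonotoneOn (fun r => g₁ r s) (Icc (0 : ℝ) δ))
    (hg₁_mono₂ : ∀ r ∈ Icc (0 : ℝ) δ, MonotoneOn (fun s => g₁ r s) (Icc (0 : ℝ) ε))
    (hg₁ : ∀ t : J, ∀ x ∈ Metric.ball (x₀ t) δ, ∀ y ∈ Metric.closedBall (y₀ t) ε,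
      ‖fderiv ℝ (fun y' => F t x y') y - fderiv ℝ (fun y' => F t (x₀ t) y') (y₀ t)‖ ≤
        g₁ ‖x - x₀ t‖ ‖y - y₀ t‖)
    (g₂ : ℝ → ℝ) (hg₂_mono : MonotoneOn g₂ (Icc (0 : ℝ) δ))
    (hg₂ : ∀ t : J, ∀ x ∈ Metric.ball (x₀ t) δ, ‖F t x (y₀ t)‖ ≤ g₂ ‖x - x₀ t‖)
    (hcond₁ : L * g₁ δ ε ≤ α) (hcond₂ : L * g₂ δ ≤ ε * (1 - α))
    -- ψ is the family of implicit maps from STATEMENT 13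
    (ψ : J → X → Y)
    (hψ : ∀ t : J, ∀ x ∈ Metric.ball (x₀ t) δ,
      ψ t x ∈ Metric.closedBall (y₀ t) ε ∧ F t x (ψ t x) = 0) :
    ∀ t : J,
      ContDiffOn ℝ 1 (ψ t) (Metric.ball (x₀ t) δ) ∧
      ∀ x ∈ Metric.ball (x₀ t) δ, ∃ Γ' : Z →L[ℝ] Y,
        Γ'.comp (fderiv ℝ (fun y => F t x y) (ψ t x)) = ContinuousLinearMap.id ℝ Y ∧
        (fderiv ℝ (fun y => F t x y) (ψ t x)).comp Γ' = ContinuousLinearMap.id ℝ Z ∧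
        ‖Γ'‖ ≤ L / (1 - L * g₁ δ ε) ∧
        HasFDerivAt (ψ t) (-(Γ'.comp (fderiv ℝ (fun x' => F t x' (ψ t x)) x))) x := by
  intro t
  have hx₀mem : x₀ t ∈ Metric.ball (x₀ t) δ := mem_ball_self hδ
  have hy₀mem : y₀ t ∈ Metric.closedBall (y₀ t) ε := mem_closedBall_self hε.le
  have hmemΩ : ∀ x ∈ Metric.ball (x₀ t) δ, ∀ y ∈ Metric.closedBall (y₀ t) ε, (x, y) ∈ Ω :=
    fun x hx y hy => hS t ⟨hx, hy⟩
  have hdiff : ∀ p ∈ Ω, DifferentiableAt ℝ (fun p : X × Y => F t p.1 p.2) p := fun p hp =>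
    ((hC1 t).contDiffAt (hΩ.mem_nhds hp)).differentiableAt one_ne_zero
  -- partial derivatives
  have hpartY : ∀ p ∈ Ω, HasFDerivAt (fun y => F t p.1 y)
      ((fderiv ℝ (fun q : X × Y => F t q.1 q.2) p).comp (ContinuousLinearMap.inr ℝ X Y)) p.2 :=
    fun p hp => (hdiff (p.1, p.2) hp).hasFDerivAt.comp p.2 (hasFDerivAt_prodMk_right p.1 p.2)
  have hpartX : ∀ p ∈ Ω, HasFDerivAt (fun x' => F t x' p.2)
      ((fderiv ℝ (fun q : X × Y => F t q.1 q.2) p).comp (ContinuousLinearMap.inl ℝ X Y)) p.1 :=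
    fun p hp => by
      have := (hdiff (p.1, p.2) hp).hasFDerivAt.comp (f := fun e : X => (e, p.2)) p.1
        (hasFDerivAt_prodMk_left (𝕜 := ℝ) p.1 p.2)
      exact this
  -- uniform bound from g₁
  have key_g₁ : ∀ x ∈ Metric.ball (x₀ t) δ, ∀ y ∈ Metric.closedBall (y₀ t) ε,
      ‖fderiv ℝ (fun y' => F t x y') y - fderiv ℝ (fun y => F t (x₀ t) y) (y₀ t)‖ ≤ g₁ δ ε := by
    intro x hx y hy
    have hxd : ‖x - x₀ t‖ ≤ δ := le_of_lt (by rwa [mem_ball, dist_eq_norm] at hx)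
    have hyd : ‖y - y₀ t‖ ≤ ε := by rwa [mem_closedBall, dist_eq_norm] at hy
    have h1 := hg₁ t x hx y hy
    have h2 : g₁ ‖x - x₀ t‖ ‖y - y₀ t‖ ≤ g₁ δ ‖y - y₀ t‖ :=
      hg₁_mono₁ ‖y - y₀ t‖ ⟨norm_nonneg _, hyd⟩ ⟨norm_nonneg _, hxd⟩ ⟨hδ.le, le_refl δ⟩ hxd
    have h3 : g₁ δ ‖y - y₀ t‖ ≤ g₁ δ ε :=
      hg₁_mono₂ δ ⟨hδ.le, le_refl δ⟩ ⟨norm_nonneg _, hyd⟩ ⟨hε.le, le_refl ε⟩ hyd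
    linarith
  have hg₁nn : 0 ≤ g₁ δ ε := by
    simpa using key_g₁ (x₀ t) hx₀mem (y₀ t) hy₀mem
  have hαβ : L * g₁ δ ε < 1 := lt_of_le_of_lt hcond₁ hα1
  have hβpos : 0 < 1 - L * g₁ δ ε := by linarith
  -- uniform bound for the "contraction derivative"
  have hub : ∀ x ∈ Metric.ball (x₀ t) δ, ∀ y ∈ Metric.closedBall (y₀ t) ε,
      ‖ContinuousLinearMap.id ℝ Y - (Γ t).comp (fderiv ℝ (fun y' => F t x y') y)‖
        ≤ L * g₁ δ ε := by
    intro x hx y hy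
    have heq : ContinuousLinearMap.id ℝ Y - (Γ t).comp (fderiv ℝ (fun y' => F t x y') y)
        = (Γ t).comp
            (fderiv ℝ (fun y => F t (x₀ t) y) (y₀ t) - fderiv ℝ (fun y' => F t x y') y) := by
      rw [ContinuousLinearMap.comp_sub, hΓ_left t]
    rw [heq]
    calc ‖(Γ t).comp
          (fderiv ℝ (fun y => F t (x₀ t) y) (y₀ t) - fderiv ℝ (fun y' => F t x y') y)‖
        ≤ ‖Γ t‖ * ‖fderiv ℝ (fun y => F t (x₀ t) y) (y₀ t) - fderiv ℝ (fun y' => F t x y') y‖ :=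
          ContinuousLinearMap.opNorm_comp_le _ _
      _ ≤ L * g₁ δ ε := by
          apply mul_le_mul (hΓ_norm t) ?_ (norm_nonneg _) hL.le
          rw [norm_sub_rev]; exact key_g₁ x hx y hy
  -- contraction estimate on the closed ball
  have hcontract : ∀ x ∈ Metric.ball (x₀ t) δ, ∀ y₁ ∈ Metric.closedBall (y₀ t) ε,
      ∀ y₂ ∈ Metric.closedBall (y₀ t) ε,
      ‖(y₁ - Γ t (F t x y₁)) - (y₂ - Γ t (F t x y₂))‖ ≤ α * ‖y₁ - y₂‖ := by
    intro x hx y₁ h1 y₂ h2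
    have := (convex_closedBall (y₀ t) ε).norm_image_sub_le_of_norm_hasFDerivWithin_le
      (f := fun y => y - Γ t (F t x y))
      (f' := fun y => ContinuousLinearMap.id ℝ Y -
        (Γ t).comp (fderiv ℝ (fun y' => F t x y') y))
      (C := α)
      (fun y hy => by
        have hp := ((hpartY (x, y) (hmemΩ x hx y hy)).differentiableAt).hasFDerivAt
        exact ((hasFDerivAt_id y).sub ((Γ t).hasFDerivAt.comp y hp)).hasFDerivWithinAt)
      (fun y hy => le_trans (hub x hx y hy) hcond₁) h2 h1
    exact this
  -- continuity of ψ on the ball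
  have hψc : ∀ x ∈ Metric.ball (x₀ t) δ, ContinuousAt (ψ t) x := by
    intro x hx
    have hymem := (hψ t x hx).1
    have hpΩ : (x, ψ t x) ∈ Ω := hmemΩ x hx _ hymem
    have hFx : ContinuousAt (fun x' => F t x' (ψ t x)) x := by
      have hc : ContinuousAt (fun x' : X => (x', ψ t x)) x :=
        (continuous_id.prodMk continuous_const).continuousAt
      exact ContinuousAt.comp (f := fun x' : X => (x', ψ t x))
        ((hdiff (x, ψ t x) hpΩ).continuousAt) hc
    have key : ∀ x' ∈ Metric.ball (x₀ t) δ,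
        ‖ψ t x' - ψ t x‖ ≤ (L / (1 - α)) * ‖F t x' (ψ t x)‖ := by
      intro x' hx'
      have h0' : F t x' (ψ t x') = 0 := (hψ t x' hx').2
      have hm' := (hψ t x' hx').1
      have hc := hcontract x' hx' (ψ t x') hm' (ψ t x) hymem
      rw [h0', map_zero, sub_zero] at hc
      have e1 : ψ t x' - ψ t x
          = (ψ t x' - (ψ t x - Γ t (F t x' (ψ t x)))) - Γ t (F t x' (ψ t x)) := by abel
      have e2 : ‖ψ t x' - ψ t x‖
          ≤ α * ‖ψ t x' - ψ t x‖ + ‖Γ t (F t x' (ψ t x))‖ := by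
        calc ‖ψ t x' - ψ t x‖
            = ‖(ψ t x' - (ψ t x - Γ t (F t x' (ψ t x)))) - Γ t (F t x' (ψ t x))‖ := by rw [← e1]
          _ ≤ ‖ψ t x' - (ψ t x - Γ t (F t x' (ψ t x)))‖ + ‖Γ t (F t x' (ψ t x))‖ :=
              norm_sub_le _ _
          _ ≤ α * ‖ψ t x' - ψ t x‖ + ‖Γ t (F t x' (ψ t x))‖ := by gcongr
      have e3 : ‖Γ t (F t x' (ψ t x))‖ ≤ L * ‖F t x' (ψ t x)‖ :=
        le_trans ((Γ t).le_opNorm _)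
          (mul_le_mul_of_nonneg_right (hΓ_norm t) (norm_nonneg _))
      rw [div_mul_eq_mul_div, le_div_iff₀ (by linarith)]
      nlinarith [norm_nonneg (ψ t x' - ψ t x)]
    rw [ContinuousAt, tendsto_iff_dist_tendsto_zero]
    have hg0 : Filter.Tendsto (fun x' => (L / (1 - α)) * ‖F t x' (ψ t x)‖) (𝓝 x) (𝓝 0) := by
      have h1 : Filter.Tendsto (fun x' => (L / (1 - α)) * ‖F t x' (ψ t x)‖) (𝓝 x)
          (𝓝 ((L / (1 - α)) * ‖F t x (ψ t x)‖)) := (hFx.norm.const_mul _)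
      simpa [(hψ t x hx).2] using h1
    refine squeeze_zero' (Filter.Eventually.of_forall fun _ => dist_nonneg) ?_ hg0
    filter_upwards [isOpen_ball.eventually_mem hx] with x' hx'
    rw [dist_eq_norm]
    exact key x' hx'
  -- main pointwise statement
  set Mm : X → (X × Y) →L[ℝ] Z :=
    fun x => fderiv ℝ (fun p : X × Y => F t p.1 p.2) (x, ψ t x) with hMm
  set Bm : X → Y →L[ℝ] Z := fun x => (Mm x).comp (ContinuousLinearMap.inr ℝ X Y) with hBm
  set Am : X → X →L[ℝ] Z := fun x => (Mm x).comp (ContinuousLinearMap.inl ℝ X Y) with hAm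
  set um : X → Y →L[ℝ] Y := fun x => (Γ t).comp (Bm x) with hum
  set Gm : X → Z →L[ℝ] Y := fun x => (Ring.inverse (um x)).comp (Γ t) with hGm
  have main : ∀ x ∈ Metric.ball (x₀ t) δ,
      fderiv ℝ (fun y => F t x y) (ψ t x) = Bm x ∧
      fderiv ℝ (fun x' => F t x' (ψ t x)) x = Am x ∧
      IsUnit (um x) ∧
      (Gm x).comp (Bm x) = ContinuousLinearMap.id ℝ Y ∧
      (Bm x).comp (Gm x) = ContinuousLinearMap.id ℝ Z ∧
      ‖Gm x‖ ≤ L / (1 - L * g₁ δ ε) ∧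
      HasFDerivAt (ψ t) (-((Gm x).comp (Am x))) x := by
    intro x hx
    have hymem := (hψ t x hx).1
    have hpΩ : (x, ψ t x) ∈ Ω := hmemΩ x hx _ hymem
    -- partial derivative identifications
    have h1 : fderiv ℝ (fun y => F t x y) (ψ t x) = Bm x := (hpartY (x, ψ t x) hpΩ).fderiv
    have h2 : fderiv ℝ (fun x' => F t x' (ψ t x)) x = Am x := (hpartX (x, ψ t x) hpΩ).fderiv
    -- Neumann series inverse
    have hwle : ‖1 - um x‖ ≤ L * g₁ δ ε := by
      have hh := hub x hx (ψ t x) hymem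
      rw [h1] at hh
      rwa [ContinuousLinearMap.one_def]
    have hwlt : ‖1 - um x‖ < 1 := lt_of_le_of_lt hwle hαβ
    have hunit : IsUnit (um x) := by
      have := isUnit_one_sub_of_norm_lt_one hwlt
      rwa [sub_sub_cancel] at this
    have hinv_left : Ring.inverse (um x) * um x = 1 := Ring.inverse_mul_cancel _ hunit
    have hinv_right : um x * Ring.inverse (um x) = 1 := Ring.mul_inverse_cancel _ hunit
    have hq3 : (Gm x).comp (Bm x) = ContinuousLinearMap.id ℝ Y := by
      ext v
      have hv : (Ring.inverse (um x) * um x) v = (1 : Y →L[ℝ] Y) v := by rw [hinv_left]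
      simpa [hGm, hum, ContinuousLinearMap.mul_apply, ContinuousLinearMap.one_apply] using hv
    have hΓinj : Function.Injective (Γ t) := by
      intro a b hab
      have ha := ContinuousLinearMap.ext_iff.mp (hΓ_right t) a
      have hb := ContinuousLinearMap.ext_iff.mp (hΓ_right t) b
      simp only [ContinuousLinearMap.comp_apply, ContinuousLinearMap.id_apply] at ha hb
      rw [← ha, ← hb, hab]
    have hq4 : (Bm x).comp (Gm x) = ContinuousLinearMap.id ℝ Z := by
      ext z
      apply hΓinj
      have hv : (um x * Ring.inverse (um x)) (Γ t z) = (1 : Y →L[ℝ] Y) (Γ t z) := by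
        rw [hinv_right]
      simpa [hGm, hum, ContinuousLinearMap.mul_apply, ContinuousLinearMap.one_apply] using hv
    have hRinvtsum : Ring.inverse (um x) = ∑' n : ℕ, (1 - um x) ^ n := by
      conv_lhs => rw [show um x = 1 - (1 - um x) from (sub_sub_cancel 1 (um x)).symm]
      exact (geom_series_eq_inverse _ hwlt).symm
    have hnv : ‖Ring.inverse (um x)‖ ≤ (1 - L * g₁ δ ε)⁻¹ := by
      have hone : ‖(1 : Y →L[ℝ] Y)‖ ≤ 1 := by
        rw [ContinuousLinearMap.one_def]; exact ContinuousLinearMap.norm_id_le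
      calc ‖Ring.inverse (um x)‖ = ‖∑' n : ℕ, (1 - um x) ^ n‖ := by rw [hRinvtsum]
        _ ≤ ‖(1 : Y →L[ℝ] Y)‖ - 1 + (1 - ‖1 - um x‖)⁻¹ := tsum_geometric_le_of_norm_lt_one _ hwlt
        _ ≤ (1 - ‖1 - um x‖)⁻¹ := by linarith
        _ ≤ (1 - L * g₁ δ ε)⁻¹ := by
            apply inv_anti₀ hβpos
            linarith
    have hq5 : ‖Gm x‖ ≤ L / (1 - L * g₁ δ ε) := by
      rw [hGm]
      calc ‖(Ring.inverse (um x)).comp (Γ t)‖ ≤ ‖Ring.inverse (um x)‖ * ‖Γ t‖ :=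
            ContinuousLinearMap.opNorm_comp_le _ _
        _ ≤ (1 - L * g₁ δ ε)⁻¹ * L :=
            mul_le_mul hnv (hΓ_norm t) (norm_nonneg _) (inv_nonneg.2 hβpos.le)
        _ = L / (1 - L * g₁ δ ε) := by rw [div_eq_mul_inv, mul_comm]
    -- the inverse function theorem setup
    have hstrict : HasStrictFDerivAt (fun p : X × Y => F t p.1 p.2) (Mm x) (x, ψ t x) :=
      ((hC1 t).contDiffAt (hΩ.mem_nhds hpΩ)).hasStrictFDerivAt one_ne_zero
    have hMsplit : ∀ a : X, ∀ b : Y, (Mm x) (a, b) = (Am x) a + (Bm x) b := by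
      intro a b
      have h := (Mm x).map_add (a, (0 : Y)) ((0 : X), b)
      simp only [Prod.mk_add_mk, add_zero, zero_add] at h
      rw [h, hAm, hBm]
      simp [ContinuousLinearMap.comp_apply]
    have h3' : ∀ v : Y, (Gm x) ((Bm x) v) = v := fun v => by
      have := ContinuousLinearMap.ext_iff.mp hq3 v
      simpa using this
    have h4' : ∀ z : Z, (Bm x) ((Gm x) z) = z := fun z => by
      have := ContinuousLinearMap.ext_iff.mp hq4 z
      simpa using this
    set Φ' : (X × Y) →L[ℝ] (X × Z) := (ContinuousLinearMap.fst ℝ X Y).prod (Mm x) with hΦ'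
    set Ψ' : (X × Z) →L[ℝ] (X × Y) := (ContinuousLinearMap.fst ℝ X Z).prod
        ((Gm x).comp
          ((ContinuousLinearMap.snd ℝ X Z) - (Am x).comp (ContinuousLinearMap.fst ℝ X Z)))
      with hΨ'
    have hleftinv : Function.LeftInverse Ψ' Φ' := by
      rintro ⟨a, b⟩
      simp only [hΦ', hΨ', ContinuousLinearMap.prod_apply, ContinuousLinearMap.coe_fst',
        ContinuousLinearMap.coe_comp', Function.comp_apply, ContinuousLinearMap.coe_sub',
        Pi.sub_apply, ContinuousLinearMap.coe_snd']
      rw [hMsplit, add_sub_cancel_left, h3' b]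
    have hrightinv : Function.RightInverse Ψ' Φ' := by
      rintro ⟨a, z⟩
      simp only [hΦ', hΨ', ContinuousLinearMap.prod_apply, ContinuousLinearMap.coe_fst',
        ContinuousLinearMap.coe_comp', Function.comp_apply, ContinuousLinearMap.coe_sub',
        Pi.sub_apply, ContinuousLinearMap.coe_snd']
      rw [hMsplit, h4']
      simp
    set E : (X × Y) ≃L[ℝ] (X × Z) :=
      ContinuousLinearEquiv.equivOfInverse Φ' Ψ' hleftinv hrightinv with hE
    have hEcoe : (E : (X × Y) →L[ℝ] (X × Z)) = Φ' := rfl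
    have hstrictΦ : HasStrictFDerivAt (fun p : X × Y => (p.1, F t p.1 p.2))
        (E : (X × Y) →L[ℝ] (X × Z)) (x, ψ t x) := by
      rw [hEcoe, hΦ']
      exact (hasStrictFDerivAt_fst).prodMk hstrict
    set linv := hstrictΦ.localInverse (fun p : X × Y => (p.1, F t p.1 p.2)) E (x, ψ t x)
      with hlinv
    have hψx : Filter.Tendsto (fun x' => (x', ψ t x')) (𝓝 x) (𝓝 (x, ψ t x)) :=
      (continuousAt_id.prodMk (hψc x hx))
    have hev : ∀ᶠ x' in 𝓝 x, ψ t x' = (linv (x', (0 : Z))).2 := by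
      have h1' := hψx.eventually hstrictΦ.eventually_left_inverse
      filter_upwards [h1', isOpen_ball.eventually_mem hx] with x' ha hb
      have h0 : F t x' (ψ t x') = 0 := (hψ t x' hb).2
      have ha' : linv (x', (0 : Z)) = (x', ψ t x') := by
        rw [← h0]; exact ha
      rw [ha']
    have hΦpt : (fun p : X × Y => (p.1, F t p.1 p.2)) (x, ψ t x) = (x, (0 : Z)) := by
      simp [(hψ t x hx).2]
    have hlinvd : HasStrictFDerivAt linv ((E.symm : (X × Z) →L[ℝ] (X × Y))) (x, (0 : Z)) := by
      have h := hstrictΦ.to_localInverse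
      simp only [(hψ t x hx).2] at h
      exact h
    have hgd : HasFDerivAt (fun x' => (linv (x', (0 : Z))).2)
        ((ContinuousLinearMap.snd ℝ X Y).comp (((E.symm : (X × Z) →L[ℝ] (X × Y))).comp
          (ContinuousLinearMap.inl ℝ X Z))) x := by
      have ha : HasFDerivAt (fun x' : X => (x', (0 : Z))) (ContinuousLinearMap.inl ℝ X Z) x :=
        hasFDerivAt_prodMk_left x (0 : Z)
      have hb := hlinvd.hasFDerivAt.comp x ha
      exact ((ContinuousLinearMap.snd ℝ X Y).hasFDerivAt).comp x hb
    have hDeq : (ContinuousLinearMap.snd ℝ X Y).comp (((E.symm : (X × Z) →L[ℝ] (X × Y))).comp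
          (ContinuousLinearMap.inl ℝ X Z))
        = -((Gm x).comp (Am x)) := by
      have hEsymm : (E.symm : (X × Z) →L[ℝ] (X × Y)) = Ψ' := by
        rw [hE, ContinuousLinearEquiv.symm_equivOfInverse]
        rfl
      rw [hEsymm]
      ext v
      simp [hΨ', map_sub]
    have hq6 : HasFDerivAt (ψ t) (-((Gm x).comp (Am x))) x := by
      rw [← hDeq]
      exact (Filter.EventuallyEq.hasFDerivAt_iff hev).2 hgd
    exact ⟨h1, h2, hunit, hq3, hq4, hq5, hq6⟩
  constructor
  · -- ContDiffOn
    rw [show (1 : WithTop ℕ∞) = 0 + 1 by norm_num, contDiffOn_succ_iff_fderiv_of_isOpen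
      isOpen_ball]
    refine ⟨fun x hx => ((main x hx).2.2.2.2.2.2).differentiableAt.differentiableWithinAt,
      by simp, ?_⟩
    rw [contDiffOn_zero]
    have hψcont : ContinuousOn (ψ t) (Metric.ball (x₀ t) δ) :=
      fun x hx => (hψc x hx).continuousWithinAt
    have hMcont : ContinuousOn Mm (Metric.ball (x₀ t) δ) := by
      have h1 : ContinuousOn (fderiv ℝ (fun p : X × Y => F t p.1 p.2)) Ω :=
        (hC1 t).continuousOn_fderiv_of_isOpen hΩ le_rfl
      have h2 : ContinuousOn (fun x => (x, ψ t x)) (Metric.ball (x₀ t) δ) :=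
        continuousOn_id.prodMk hψcont
      rw [hMm]
      exact h1.comp h2 (fun x hx => hmemΩ x hx _ (hψ t x hx).1)
    have hBcont : ContinuousOn Bm (Metric.ball (x₀ t) δ) := by
      rw [hBm]; exact hMcont.clm_comp continuousOn_const
    have hAcont : ContinuousOn Am (Metric.ball (x₀ t) δ) := by
      rw [hAm]; exact hMcont.clm_comp continuousOn_const
    have hucont : ContinuousOn um (Metric.ball (x₀ t) δ) := by
      rw [hum]; exact continuousOn_const.clm_comp hBcont
    have hinvcont : ContinuousOn (fun x => Ring.inverse (um x)) (Metric.ball (x₀ t) δ) := by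
      intro x hx
      have hunit := (main x hx).2.2.1
      have h5 := NormedRing.inverse_continuousAt hunit.unit
      rw [hunit.unit_spec] at h5
      exact (h5.comp (hucont.continuousAt (isOpen_ball.mem_nhds hx))).continuousWithinAt
    have hGcont : ContinuousOn Gm (Metric.ball (x₀ t) δ) := by
      rw [hGm]; exact hinvcont.clm_comp continuousOn_const
    have hDcont : ContinuousOn (fun x => -((Gm x).comp (Am x))) (Metric.ball (x₀ t) δ) :=
      (hGcont.clm_comp hAcont).neg
    exact hDcont.congr (fun x hx => ((main x hx).2.2.2.2.2.2).fderiv)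
  · intro x hx
    obtain ⟨h1, h2, hunit, h3, h4, h5, h6⟩ := main x hx
    refine ⟨Gm x, ?_, ?_, h5, ?_⟩
    · rw [h1]; exact h3
    · rw [h1]; exact h4
    · rw [h2]; exact h6
end

section
/- For every σ ∈ ℝ, the constant radial input u_cst(s) = σ(ℓ − x₀) is not a universal input trajectory of the bearing-only system — i.e. for every t ≥ 0 there exist ξ₁ ≠ ξ₂ in ℝ² such that h(φ(s;0,ξ₁,u_cst)) = h(φ(s;0,ξ₂,u_cst)) for all s ∈ [0,t] — and u_cst is not weakly persistent at x₀. -/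
open MeasureTheory Metric Set Filter Classical

/-- The plane `ℝ²` with the Euclidean norm. -/
abbrev Pt := EuclideanSpace ℝ (Fin 2)

/-- The vector `(a, b) ∈ ℝ²`. -/
noncomputable def vec2 (a b : ℝ) : Pt := (WithLp.equiv 2 (Fin 2 → ℝ)).symm ![a, b]

/-- Bearing measurement towards the beacon `ℓ`: `h(z) = (ℓ−z)/‖ℓ−z‖` for `z ≠ ℓ`
(with the convention `h(ℓ) = 0`). -/
noncomputable def bearing (ℓ z : Pt) : Pt := if z = ℓ then 0 else ‖ℓ - z‖⁻¹ • (ℓ - z)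

/-- Flow of the single-integrator dynamics `ẋ = u`:
`φ(s;t₁,ξ,u) = ξ + ∫_{t₁}^{s} u(τ)dτ`. -/
noncomputable def flow2 (u : ℝ → Pt) (s t₁ : ℝ) (ξ : Pt) : Pt := ξ + ∫ τ in t₁..s, u τ

/-- Cumulative output error of the bearing-only system. -/
noncomputable def cumError2 (ℓ : Pt) (u : ℝ → Pt) (t₁ t₂ : ℝ) (ξ₁ ξ₂ : Pt) : ℝ :=
  ∫ s in t₁..t₂, ‖bearing ℓ (flow2 u s t₁ ξ₁) - bearing ℓ (flow2 u s t₁ ξ₂)‖ ^ 2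

/-- Weakly persistent input trajectory at `x₀` for the bearing-only system. -/
def WeaklyPersistentAt2 (ℓ : Pt) (u : ℝ → Pt) (x₀ : Pt) : Prop :=
  ∃ T > (0 : ℝ), ∀ t ≥ T, ∃ R > (0 : ℝ), ∃ κ : ℝ → ℝ, IsKFunction κ ∧
    ∀ ξ₁ ∈ Metric.closedBall (flow2 u (t - T) 0 x₀) R,
      ∀ ξ₂ ∈ Metric.closedBall (flow2 u (t - T) 0 x₀) R,
        κ ‖ξ₁ - ξ₂‖ ≤ cumError2 ℓ u (t - T) t ξ₁ ξ₂

lemma flow_line (ℓ x₀ : Pt) (σ c s t₁ : ℝ) :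
    flow2 (fun _ => σ • (ℓ - x₀)) s t₁ (ℓ + c • (x₀ - ℓ)) =
      ℓ + (c - (s - t₁) * σ) • (x₀ - ℓ) := by
  simp only [flow2, intervalIntegral.integral_const]
  module

lemma bearing_neg (ℓ : Pt) {v : Pt} (hv : v ≠ 0) {a : ℝ} (ha : a < 0) :
    bearing ℓ (ℓ + a • v) = ‖v‖⁻¹ • v := by
  have hne : ℓ + a • v ≠ ℓ := by
    simp [smul_eq_zero, ha.ne, hv]
  rw [bearing, if_neg hne]
  have h1 : ℓ - (ℓ + a • v) = (-a) • v := by module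
  rw [h1, norm_smul, smul_smul]
  congr 1
  rw [Real.norm_eq_abs, abs_of_pos (by linarith)]
  have hn : ‖v‖ ≠ 0 := norm_ne_zero_iff.mpr hv
  rw [mul_inv, mul_right_comm, inv_mul_cancel₀ (neg_ne_zero.mpr ha.ne), one_mul]

lemma bearing_pos (ℓ : Pt) {v : Pt} (hv : v ≠ 0) {a : ℝ} (ha : 0 < a) :
    bearing ℓ (ℓ + a • v) = -(‖v‖⁻¹ • v) := by
  have hne : ℓ + a • v ≠ ℓ := by
    simp [smul_eq_zero, ha.ne', hv]
  rw [bearing, if_neg hne]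
  have h1 : ℓ - (ℓ + a • v) = (-a) • v := by module
  rw [h1, norm_smul, smul_smul, ← neg_smul]
  congr 1
  rw [Real.norm_eq_abs, abs_of_neg (by linarith)]
  have hn : ‖v‖ ≠ 0 := norm_ne_zero_iff.mpr hv
  simp only [neg_neg]
  rw [mul_neg, mul_inv, mul_right_comm, inv_mul_cancel₀ ha.ne', one_mul]

lemma bearing_flow_eq (ℓ x₀ : Pt) (hv : x₀ - ℓ ≠ 0) (σ s t₁ c₁ c₂ : ℝ)
    (h : (c₁ - (s - t₁) * σ < 0 ∧ c₂ - (s - t₁) * σ < 0) ∨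
         (0 < c₁ - (s - t₁) * σ ∧ 0 < c₂ - (s - t₁) * σ)) :
    bearing ℓ (flow2 (fun _ => σ • (ℓ - x₀)) s t₁ (ℓ + c₁ • (x₀ - ℓ))) =
      bearing ℓ (flow2 (fun _ => σ • (ℓ - x₀)) s t₁ (ℓ + c₂ • (x₀ - ℓ))) := by
  rw [flow_line, flow_line]
  rcases h with ⟨h1, h2⟩ | ⟨h1, h2⟩
  · rw [bearing_neg ℓ hv h1, bearing_neg ℓ hv h2]
  · rw [bearing_pos ℓ hv h1, bearing_pos ℓ hv h2]

lemma line_ne (ℓ : Pt) {v : Pt} (hv : v ≠ 0) {c₁ c₂ : ℝ} (h : c₁ ≠ c₂) :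
    ℓ + c₁ • v ≠ ℓ + c₂ • v := by
  intro he
  have h2 : c₁ • v = c₂ • v := add_left_cancel he
  exact h ((smul_left_injective ℝ hv) h2)

lemma cum_zero (ℓ x₀ : Pt) (hv : x₀ - ℓ ≠ 0) (σ t₁ t₂ c₁ c₂ : ℝ)
    (h : ∀ s ∈ Set.uIcc t₁ t₂,
      (c₁ - (s - t₁) * σ < 0 ∧ c₂ - (s - t₁) * σ < 0) ∨
      (0 < c₁ - (s - t₁) * σ ∧ 0 < c₂ - (s - t₁) * σ)) :
    cumError2 ℓ (fun _ => σ • (ℓ - x₀)) t₁ t₂ (ℓ + c₁ • (x₀ - ℓ)) (ℓ + c₂ • (x₀ - ℓ)) = 0 := by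
  rw [cumError2]
  rw [intervalIntegral.integral_congr (g := fun _ => (0 : ℝ))]
  · simp
  · intro s hs
    simp only
    rw [bearing_flow_eq ℓ x₀ hv σ s t₁ c₁ c₂ (h s hs)]
    simp

lemma line_dist (ℓ v : Pt) (a b : ℝ) : (ℓ + a • v) - (ℓ + b • v) = (a - b) • v := by
  module

lemma contra_aux (ℓ x₀ : Pt) (hv : x₀ - ℓ ≠ 0) (σ T t c : ℝ)
    (R : ℝ) (hR : 0 < R) (κ : ℝ → ℝ) (hκ : IsKFunction κ)
    (hcenter : flow2 (fun _ => σ • (ℓ - x₀)) (t - T) 0 x₀ = ℓ + c • (x₀ - ℓ))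
    (c₂ : ℝ) (hc₂ : |c₂ - c| = R / ‖x₀ - ℓ‖)
    (hsign : ∀ s ∈ Set.uIcc (t - T) t,
      (c - (s - (t - T)) * σ < 0 ∧ c₂ - (s - (t - T)) * σ < 0) ∨
      (0 < c - (s - (t - T)) * σ ∧ 0 < c₂ - (s - (t - T)) * σ))
    (hall : ∀ ξ₁ ∈ Metric.closedBall (flow2 (fun _ => σ • (ℓ - x₀)) (t - T) 0 x₀) R,
      ∀ ξ₂ ∈ Metric.closedBall (flow2 (fun _ => σ • (ℓ - x₀)) (t - T) 0 x₀) R,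
        κ ‖ξ₁ - ξ₂‖ ≤ cumError2 ℓ (fun _ => σ • (ℓ - x₀)) (t - T) t ξ₁ ξ₂) : False := by
  have hvn : (0 : ℝ) < ‖x₀ - ℓ‖ := norm_pos_iff.mpr hv
  have hmem1 : ℓ + c • (x₀ - ℓ) ∈
      Metric.closedBall (flow2 (fun _ => σ • (ℓ - x₀)) (t - T) 0 x₀) R := by
    rw [hcenter]; exact Metric.mem_closedBall_self hR.le
  have hmem2 : ℓ + c₂ • (x₀ - ℓ) ∈
      Metric.closedBall (flow2 (fun _ => σ • (ℓ - x₀)) (t - T) 0 x₀) R := by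
    rw [hcenter, Metric.mem_closedBall, dist_eq_norm, line_dist, norm_smul,
      Real.norm_eq_abs, hc₂, div_mul_cancel₀ _ hvn.ne']
  have hkey := hall _ hmem1 _ hmem2
  rw [line_dist, norm_smul, Real.norm_eq_abs, abs_sub_comm, hc₂,
    div_mul_cancel₀ _ hvn.ne', cum_zero ℓ x₀ hv σ (t - T) t c c₂ hsign] at hkey
  obtain ⟨-, hκm, hκ0⟩ := hκ
  have : κ 0 < κ R := hκm (le_refl (0:ℝ)) hR.le hR
  linarith

/-- the constant radial input `u_cst(s) = σ(ℓ − x₀)` is neither a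
universal input trajectory of the bearing-only system nor weakly persistent at `x₀`. -/
theorem stmt17 (ℓ x₀ : Pt) (hx₀ : x₀ ≠ ℓ) (σ : ℝ) :
    (∀ t : ℝ, 0 ≤ t → ∃ ξ₁ ξ₂ : Pt, ξ₁ ≠ ξ₂ ∧
      ∀ s ∈ Icc (0 : ℝ) t,
        bearing ℓ (flow2 (fun _ => σ • (ℓ - x₀)) s 0 ξ₁) =
          bearing ℓ (flow2 (fun _ => σ • (ℓ - x₀)) s 0 ξ₂)) ∧
    ¬ WeaklyPersistentAt2 ℓ (fun _ => σ • (ℓ - x₀)) x₀ := by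
  have hv : x₀ - ℓ ≠ 0 := sub_ne_zero.mpr hx₀
  have hvn : (0 : ℝ) < ‖x₀ - ℓ‖ := norm_pos_iff.mpr hv
  constructor
  · intro t ht
    refine ⟨ℓ + (-(|σ| * t + 1)) • (x₀ - ℓ), ℓ + (-(|σ| * t + 2)) • (x₀ - ℓ),
      line_ne ℓ hv (by intro h; linarith), ?_⟩
    intro s hs
    refine bearing_flow_eq ℓ x₀ hv σ s 0 _ _ (Or.inl ⟨?_, ?_⟩) <;>
    · nlinarith [mul_le_mul_of_nonneg_left (neg_abs_le σ) hs.1,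
        mul_le_mul_of_nonneg_right hs.2 (abs_nonneg σ)]
  · rintro ⟨T, hT, hP⟩
    by_cases hσ : σ ≤ 0
    · obtain ⟨R, hR, κ, hκ, hall⟩ := hP T le_rfl
      set ε := R / ‖x₀ - ℓ‖ with hε
      have hε0 : 0 < ε := div_pos hR hvn
      refine contra_aux ℓ x₀ hv σ T T 1 R hR κ hκ ?_ (1 + ε) ?_ ?_ hall
      · rw [sub_self, flow2, intervalIntegral.integral_same]
        module
      · rw [add_sub_cancel_left, abs_of_pos hε0]
      · intro s hs
        rw [sub_self, Set.uIcc_of_le hT.le] at hs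
        refine Or.inr ⟨?_, ?_⟩ <;>
          nlinarith [mul_nonpos_of_nonneg_of_nonpos (by linarith [hs.1] : (0:ℝ) ≤ s - (T - T)) hσ]
    · push_neg at hσ
      obtain ⟨R, hR, κ, hκ, hall⟩ := hP (T + 2 / σ) (le_add_of_nonneg_right (by positivity))
      set ε := R / ‖x₀ - ℓ‖ with hε
      have hε0 : 0 < ε := div_pos hR hvn
      have htT : T + 2 / σ - T = 2 / σ := by ring
      refine contra_aux ℓ x₀ hv σ T (T + 2 / σ) (-1) R hR κ hκ ?_ (-1 - ε) ?_ ?_ hall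
      · rw [htT, flow2, intervalIntegral.integral_const, sub_zero, smul_smul,
          div_mul_cancel₀ (2 : ℝ) hσ.ne']
        module
      · rw [show -1 - ε - (-1) = -ε by ring, abs_neg, abs_of_pos hε0]
      · intro s hs
        rw [htT] at hs ⊢
        rw [Set.uIcc_of_le (by linarith : 2 / σ ≤ T + 2 / σ)] at hs
        refine Or.inl ⟨?_, ?_⟩ <;>
          nlinarith [mul_nonneg (by linarith [hs.1] : (0:ℝ) ≤ s - 2 / σ) hσ.le]
end
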